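/- arXiv:1501.03267 — 5 statements merged into one kernel-verified Lean document; each statement's English description precedes it below -/
import Mathlib

section
/- Let X and Y be separable Banach spaces and Z a Banach space continuously embedded in L(X,Y). If the closed unit ball of Z is closed in L(X,Y) with respect to the strong operator topology, then Z has the strong convex compactness property: for any finite measure space (Ω,Σ,μ) and any bounded strongly measurable f : Ω → Z, the operator T defined by Tx = ∫_Ω f(ω)x dμ(ω) belongs to Z with ‖T‖_Z ≤ the upper integral of ‖f(ω)‖_Z dμ(ω). -/
open Filter Topology MeasureTheory
open scoped ENNReal NNReal

lemma auxA {X Y Z : Type*}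
    [NormedAddCommGroup X] [NormedSpace ℂ X]
    [NormedAddCommGroup Y] [NormedSpace ℂ Y] [CompleteSpace Y]
    [TopologicalSpace.SeparableSpace Y]
    [NormedAddCommGroup Z] [NormedSpace ℂ Z]
    (J : Z →ₗ[ℂ] (X →L[ℂ] Y))
    (CJ : ℝ) (hCJ : ∀ z : Z, ‖J z‖ ≤ CJ * ‖z‖)
    {Ω : Type*} [MeasurableSpace Ω] (μ : Measure Ω) [IsFiniteMeasure μ]
    (f : Ω → Z)
    (hmeas : ∀ v : X, AEStronglyMeasurable (fun ω => J (f ω) v) μ)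
    (T : X →L[ℂ] Y) (hT : ∀ v : X, T v = ∫ ω, J (f ω) v ∂μ)
    (g : Ω → ℝ≥0∞) (hg : Measurable g) (hfg : ∀ ω, (‖f ω‖₊ : ℝ≥0∞) ≤ g ω)
    (hgfin : ∫⁻ ω, g ω ∂μ ≠ ∞) (ω₀ : Ω) (v : ℕ → X) (N : ℕ)
    {ε : ℝ} (hε : 0 < ε) :
    ∃ z : Z, ‖z‖ ≤ (∫⁻ ω, g ω ∂μ).toReal + ε ∧
      ∀ k, (hk : k < N) → ‖J z (v k) - T (v k)‖ ≤ ε := by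
  classical
  letI : MeasurableSpace Y := borel Y
  haveI : BorelSpace Y := ⟨rfl⟩
  haveI : SecondCountableTopology Y := UniformSpace.secondCountable_of_separable Y
  set φ : ℕ → Ω → Y := fun k ω => (hmeas (v k)).mk _ ω with hφ
  -- a good measurable set S of full measure
  have hbad : μ {ω | ¬ (g ω < ∞ ∧ ∀ k ∈ Finset.range N, J (f ω) (v k) = φ k ω)} = 0 := by
    have h1 : ∀ᵐ ω ∂μ, g ω < ∞ := ae_lt_top hg hgfin
    have h2 : ∀ᵐ ω ∂μ, ∀ k ∈ Finset.range N, J (f ω) (v k) = φ k ω := by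
      rw [Filter.eventually_all_finset]
      intro k _
      exact (hmeas (v k)).ae_eq_mk
    have := h1.and h2
    exact ae_iff.mp this
  obtain ⟨S', hsub, hS'meas, hS'0⟩ := exists_measurable_superset_of_null hbad
  set S : Set Ω := S'ᶜ with hSdef
  have hSmeas : MeasurableSet S := hS'meas.compl
  have hSgood : ∀ ω ∈ S, g ω < ∞ ∧ ∀ k ∈ Finset.range N, J (f ω) (v k) = φ k ω := by
    intro ω hω
    by_contra h
    exact hω (hsub h)
  have hSae : ∀ᵐ ω ∂μ, ω ∈ S := by
    rw [ae_iff]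
    simpa [S, hSdef] using hS'0
  set F : Ω → Z := fun ω => if ω ∈ S then f ω else 0 with hF
  set G : Ω → ℝ := fun ω => if ω ∈ S then (g ω).toReal else 0 with hG
  set Θ : Ω → (Fin N → Y) × ℝ := fun ω => (fun k => J (F ω) (v k), G ω) with hΘ
  have hΘeq : ∀ ω, Θ ω = (fun k : Fin N => S.indicator (φ k) ω, S.indicator (fun ω => (g ω).toReal) ω) := by
    intro ω
    by_cases hω : ω ∈ S
    · have := (hSgood ω hω).2
      simp only [hΘ, hF, hG, if_pos hω, Set.indicator_of_mem hω]
      exact Prod.ext (funext fun k => this k (Finset.mem_range.mpr k.2)) rfl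
    · simp only [hΘ, hF, hG, if_neg hω, Set.indicator_of_notMem hω, map_zero]
      exact Prod.ext (funext fun k => by simp) rfl
  have hΘm : Measurable Θ := by
    rw [funext hΘeq]
    refine Measurable.prod ?_ ?_
    · exact measurable_pi_iff.mpr fun k =>
        ((hmeas (v k)).stronglyMeasurable_mk.measurable).indicator hSmeas
    · exact (hg.ennreal_toReal).indicator hSmeas
  have hGnn : ∀ ω, 0 ≤ G ω := by
    intro ω; by_cases hω : ω ∈ S <;> simp [hG, hω, ENNReal.toReal_nonneg]
  have hFG : ∀ ω, ‖F ω‖ ≤ G ω := by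
    intro ω
    by_cases hω : ω ∈ S
    · simp only [hF, hG, if_pos hω]
      have h1 := hfg ω
      have h2 := (hSgood ω hω).1
      have : (‖f ω‖₊ : ℝ≥0∞).toReal ≤ (g ω).toReal :=
        ENNReal.toReal_mono h2.ne h1
      simpa using this
    · simp [hF, hG, hω]
  have hGg : ∀ ω, ENNReal.ofReal (G ω) ≤ g ω := by
    intro ω
    by_cases hω : ω ∈ S
    · simp only [hG, if_pos hω]; exact ENNReal.ofReal_toReal_le
    · simp [hG, hω]
  have hGint : Integrable G μ := by
    refine ⟨((hg.ennreal_toReal).indicator hSmeas |>.stronglyMeasurable.aestronglyMeasurable).congr ?_, ?_⟩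
    · filter_upwards with ω
      by_cases hω : ω ∈ S <;> simp [hG, hω]
    · rw [hasFiniteIntegral_def]
      calc ∫⁻ ω, (‖G ω‖₊ : ℝ≥0∞) ∂μ ≤ ∫⁻ ω, g ω ∂μ := by
            refine lintegral_mono fun ω => ?_
            calc (‖G ω‖₊ : ℝ≥0∞) = ENNReal.ofReal (G ω) := Real.enorm_eq_ofReal (hGnn ω)
              _ ≤ g ω := hGg ω
        _ < ∞ := hgfin.lt_top
  set K : ℝ := max CJ 0 with hK
  set C : ℝ := 1 + K * ∑ k ∈ Finset.range N, ‖v k‖ with hC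
  have hKnn : 0 ≤ K := le_max_right _ _
  have hSum_nn : 0 ≤ ∑ k ∈ Finset.range N, ‖v k‖ :=
    Finset.sum_nonneg fun _ _ => norm_nonneg _
  have hC1 : 1 ≤ C := by
    have : 0 ≤ K * ∑ k ∈ Finset.range N, ‖v k‖ := mul_nonneg hKnn hSum_nn
    linarith
  have hΘbound : ∀ ω, ‖Θ ω‖ ≤ C * G ω := by
    intro ω
    rw [Prod.norm_def]
    refine max_le ?_ ?_
    · refine (pi_norm_le_iff_of_nonneg (mul_nonneg (le_trans zero_le_one hC1) (hGnn ω))).2 fun k => ?_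
      calc ‖J (F ω) (v k)‖ ≤ ‖J (F ω)‖ * ‖v k‖ := (J (F ω)).le_opNorm _
        _ ≤ (K * ‖F ω‖) * ‖v k‖ := by
            refine mul_le_mul_of_nonneg_right ?_ (norm_nonneg _)
            exact (hCJ _).trans (mul_le_mul_of_nonneg_right (le_max_left _ _) (norm_nonneg _))
        _ ≤ (K * G ω) * ‖v k‖ := by
            refine mul_le_mul_of_nonneg_right (mul_le_mul_of_nonneg_left (hFG ω) hKnn) (norm_nonneg _)
        _ = (K * ‖v k‖) * G ω := by ring
        _ ≤ C * G ω := by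
            refine mul_le_mul_of_nonneg_right ?_ (hGnn ω)
            have hk2 : ‖v k‖ ≤ ∑ j ∈ Finset.range N, ‖v j‖ :=
              Finset.single_le_sum (f := fun j => ‖v j‖) (fun _ _ => norm_nonneg _)
                (Finset.mem_range.mpr k.2)
            have : K * ‖v k‖ ≤ K * ∑ j ∈ Finset.range N, ‖v j‖ :=
              mul_le_mul_of_nonneg_left hk2 hKnn
            linarith
    · rw [Real.norm_of_nonneg (hGnn ω)]
      exact le_mul_of_one_le_left (hGnn ω) hC1
  have hΘint : Integrable Θ μ := by
    refine Integrable.mono' (hGint.const_mul C) hΘm.stronglyMeasurable.aestronglyMeasurable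
      (Filter.Eventually.of_forall hΘbound)
  -- approximation by simple functions with values in range Θ
  set y₀ : (Fin N → Y) × ℝ := Θ ω₀ with hy₀
  have h₀ : y₀ ∈ Set.range Θ := Set.mem_range_self _
  have hL1 := SimpleFunc.tendsto_approxOn_L1_enorm hΘm h₀
    (Filter.Eventually.of_forall fun ω => subset_closure (Set.mem_range_self ω))
    (hΘint.sub (integrable_const y₀)).2
  have hev : ∀ᶠ n in atTop,
      ∫⁻ ω, (‖SimpleFunc.approxOn Θ hΘm (Set.range Θ) y₀ h₀ n ω - Θ ω‖₊ : ℝ≥0∞) ∂μ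
        < ENNReal.ofReal ε :=
    hL1.eventually_lt_const (by simp [hε])
  obtain ⟨n, hn⟩ := hev.exists
  set q := SimpleFunc.approxOn Θ hΘm (Set.range Θ) y₀ h₀ n with hq
  have hqint : Integrable q μ :=
    SimpleFunc.integrable_approxOn hΘm hΘint h₀ (integrable_const y₀) n
  have hdiff : ‖(∫ ω, q ω ∂μ) - ∫ ω, Θ ω ∂μ‖ ≤ ε := by
    rw [← integral_sub hqint hΘint]
    refine (norm_integral_le_lintegral_norm _).trans ?_
    apply ENNReal.toReal_le_of_le_ofReal hε.le
    calc (∫⁻ ω, ENNReal.ofReal ‖q ω - Θ ω‖ ∂μ)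
        = ∫⁻ ω, (‖q ω - Θ ω‖₊ : ℝ≥0∞) ∂μ := by simp_rw [ofReal_norm]; rfl
      _ ≤ ENNReal.ofReal ε := hn.le
  -- components of ∫ Θ
  have hfst : ∀ k : Fin N, (∫ ω, Θ ω ∂μ).1 k = T (v k) := by
    intro k
    set L : ((Fin N → Y) × ℝ) →L[ℝ] Y :=
      ContinuousLinearMap.comp (ContinuousLinearMap.proj (R := ℝ) (φ := fun _ : Fin N => Y) k)
        (ContinuousLinearMap.fst ℝ (Fin N → Y) ℝ) with hL
    have h1 : ∫ ω, L (Θ ω) ∂μ = L (∫ ω, Θ ω ∂μ) := ContinuousLinearMap.integral_comp_comm L hΘint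
    have h2 : ∀ᵐ ω ∂μ, L (Θ ω) = J (f ω) (v k) := by
      filter_upwards [hSae] with ω hω
      calc L (Θ ω) = J (F ω) (v k) := rfl
        _ = J (f ω) (v k) := by simp only [hF]; rw [if_pos hω]
    have h3 : ∫ ω, L (Θ ω) ∂μ = T (v k) := by
      rw [integral_congr_ae h2, hT]
    rw [← h3, h1]
    rfl
  have hsnd : (∫ ω, Θ ω ∂μ).2 ≤ (∫⁻ ω, g ω ∂μ).toReal := by
    set L : ((Fin N → Y) × ℝ) →L[ℝ] ℝ := ContinuousLinearMap.snd ℝ (Fin N → Y) ℝ with hL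
    have h1 : ∫ ω, L (Θ ω) ∂μ = L (∫ ω, Θ ω ∂μ) := ContinuousLinearMap.integral_comp_comm L hΘint
    have h2 : (∫ ω, Θ ω ∂μ).2 = ∫ ω, G ω ∂μ := by
      rw [show (∫ ω, Θ ω ∂μ).2 = L (∫ ω, Θ ω ∂μ) from rfl, ← h1]; rfl
    rw [h2]
    have h3 : ∫ ω, G ω ∂μ = (∫⁻ ω, ENNReal.ofReal (G ω) ∂μ).toReal :=
      integral_eq_lintegral_of_nonneg_ae (Filter.Eventually.of_forall hGnn)
        hGint.aestronglyMeasurable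
    rw [h3]
    exact ENNReal.toReal_mono hgfin (lintegral_mono hGg)
  -- choose representatives
  set ρ : (Fin N → Y) × ℝ → Ω := fun y => if h : ∃ ω, Θ ω = y then h.choose else ω₀ with hρdef
  have hρ : ∀ y ∈ Set.range Θ, Θ (ρ y) = y := by
    intro y hy
    obtain ⟨ω, hω⟩ := hy
    have h : ∃ ω, Θ ω = y := ⟨ω, hω⟩
    simp only [hρdef, dif_pos h]
    exact h.choose_spec
  set z : Z := ∑ y ∈ q.range, (μ (⇑q ⁻¹' {y})).toReal • F (ρ y) with hz
  have hmemr : ∀ y ∈ q.range, y ∈ Set.range Θ := by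
    intro y hy
    obtain ⟨x, hx⟩ := SimpleFunc.mem_range.mp hy
    exact hx ▸ SimpleFunc.approxOn_mem hΘm h₀ n x
  have hqint_eq : q.integral μ = ∫ ω, q ω ∂μ := q.integral_eq_integral hqint
  have hq_sum : q.integral μ = ∑ y ∈ q.range, (μ (⇑q ⁻¹' {y})).toReal • y :=
    SimpleFunc.integral_eq μ q
  -- the first components
  have hJz : ∀ k : Fin N, J z (v k) = (∫ ω, q ω ∂μ).1 k := by
    intro k
    have h1 : J z (v k) = ∑ y ∈ q.range, (μ (⇑q ⁻¹' {y})).toReal • (J (F (ρ y)) (v k)) := by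
      rw [hz, map_sum]
      rw [ContinuousLinearMap.sum_apply]
      refine Finset.sum_congr rfl fun y _ => ?_
      rw [LinearMap.map_smul_of_tower]
      rfl
    have h2 : ∀ y ∈ q.range, J (F (ρ y)) (v k) = y.1 k := by
      intro y hy
      have := hρ y (hmemr y hy)
      calc J (F (ρ y)) (v k) = (Θ (ρ y)).1 k := rfl
        _ = y.1 k := by rw [this]
    rw [h1, Finset.sum_congr rfl fun y hy => by rw [h2 y hy]]
    rw [← hqint_eq, hq_sum]
    simp [Prod.fst_sum, Finset.sum_apply, Prod.smul_fst, Pi.smul_apply]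
  have hnz : ‖z‖ ≤ (∫ ω, q ω ∂μ).2 := by
    calc ‖z‖ ≤ ∑ y ∈ q.range, ‖(μ (⇑q ⁻¹' {y})).toReal • F (ρ y)‖ := norm_sum_le _ _
      _ ≤ ∑ y ∈ q.range, (μ (⇑q ⁻¹' {y})).toReal * G (ρ y) := by
          refine Finset.sum_le_sum fun y _ => ?_
          rw [norm_smul, Real.norm_of_nonneg ENNReal.toReal_nonneg]
          exact mul_le_mul_of_nonneg_left (hFG _) ENNReal.toReal_nonneg
      _ = ∑ y ∈ q.range, (μ (⇑q ⁻¹' {y})).toReal * y.2 := by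
          refine Finset.sum_congr rfl fun y hy => ?_
          have : Θ (ρ y) = y := hρ y (hmemr y hy)
          have h2 : G (ρ y) = y.2 := by conv_rhs => rw [← this]
          rw [h2]
      _ = (∫ ω, q ω ∂μ).2 := by
          rw [← hqint_eq, hq_sum]
          simp [Prod.snd_sum, smul_eq_mul]
  refine ⟨z, ?_, ?_⟩
  · have h1 : (∫ ω, q ω ∂μ).2 ≤ (∫ ω, Θ ω ∂μ).2 + ε := by
      have : |(∫ ω, q ω ∂μ).2 - (∫ ω, Θ ω ∂μ).2| ≤ ε := by
        have := (norm_snd_le ((∫ ω, q ω ∂μ) - (∫ ω, Θ ω ∂μ))).trans hdiff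
        simpa [Prod.snd_sub, Real.norm_eq_abs] using this
      linarith [abs_le.mp this |>.2]
    calc ‖z‖ ≤ (∫ ω, q ω ∂μ).2 := hnz
      _ ≤ (∫ ω, Θ ω ∂μ).2 + ε := h1
      _ ≤ (∫⁻ ω, g ω ∂μ).toReal + ε := by linarith [hsnd]
  · intro k hk
    have hJzk := hJz ⟨k, hk⟩
    have hfstk := hfst ⟨k, hk⟩
    rw [show v k = v (⟨k, hk⟩ : Fin N).1 from rfl, hJzk, ← hfstk]
    calc ‖(∫ ω, q ω ∂μ).1 ⟨k, hk⟩ - (∫ ω, Θ ω ∂μ).1 ⟨k, hk⟩‖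
        = ‖(((∫ ω, q ω ∂μ) - (∫ ω, Θ ω ∂μ)).1) ⟨k, hk⟩‖ := by simp [Prod.fst_sub]
      _ ≤ ‖((∫ ω, q ω ∂μ) - (∫ ω, Θ ω ∂μ)).1‖ := norm_le_pi_norm _ _
      _ ≤ ‖(∫ ω, q ω ∂μ) - (∫ ω, Θ ω ∂μ)‖ := norm_fst_le _
      _ ≤ ε := hdiff

lemma auxB {X Y Z : Type*}
    [NormedAddCommGroup X] [NormedSpace ℂ X] [TopologicalSpace.SeparableSpace X]
    [NormedAddCommGroup Y] [NormedSpace ℂ Y] [CompleteSpace Y]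
    [TopologicalSpace.SeparableSpace Y]
    [NormedAddCommGroup Z] [NormedSpace ℂ Z]
    (J : Z →ₗ[ℂ] (X →L[ℂ] Y))
    (CJ : ℝ) (hCJ : ∀ z : Z, ‖J z‖ ≤ CJ * ‖z‖)
    (hball : ∀ (z : ℕ → Z) (T : X →L[ℂ] Y), (∀ n, ‖z n‖ ≤ 1) →
      (∀ v : X, Tendsto (fun n => J (z n) v) atTop (𝓝 (T v))) →
      ∃ z₀ : Z, ‖z₀‖ ≤ 1 ∧ J z₀ = T)
    {Ω : Type*} [MeasurableSpace Ω] (μ : Measure Ω) [IsFiniteMeasure μ]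
    (f : Ω → Z)
    (hmeas : ∀ v : X, AEStronglyMeasurable (fun ω => J (f ω) v) μ)
    (T : X →L[ℂ] Y) (hT : ∀ v : X, T v = ∫ ω, J (f ω) v ∂μ)
    (g : Ω → ℝ≥0∞) (hg : Measurable g) (hfg : ∀ ω, (‖f ω‖₊ : ℝ≥0∞) ≤ g ω)
    (hgfin : ∫⁻ ω, g ω ∂μ ≠ ∞) (ω₀ : Ω)
    {ε₀ : ℝ} (hε₀ : 0 < ε₀) :
    ∃ z : Z, J z = T ∧ ‖z‖ ≤ (∫⁻ ω, g ω ∂μ).toReal + ε₀ := by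
  haveI : Nonempty X := ⟨0⟩
  set v : ℕ → X := TopologicalSpace.denseSeq X with hvdef
  have hv : DenseRange v := TopologicalSpace.denseRange_denseSeq X
  set I := (∫⁻ ω, g ω ∂μ).toReal with hI
  have hInn : 0 ≤ I := ENNReal.toReal_nonneg
  set c := I + ε₀ with hc
  have hcpos : 0 < c := by linarith
  have hzn : ∀ n : ℕ, ∃ z : Z, ‖z‖ ≤ I + ε₀ ∧
      ∀ k, k < n → ‖J z (v k) - T (v k)‖ ≤ 1 / (n + 1) := by
    intro n
    have hε : 0 < min ε₀ (1 / ((n : ℝ) + 1)) := lt_min hε₀ (by positivity)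
    obtain ⟨z, hz1, hz2⟩ := auxA J CJ hCJ μ f hmeas T hT g hg hfg hgfin ω₀ v n hε
    refine ⟨z, hz1.trans ?_, fun k hk => (hz2 k hk).trans (min_le_right _ _)⟩
    have := min_le_left ε₀ (1 / ((n : ℝ) + 1))
    linarith
  choose zn hzn1 hzn2 using hzn
  set K : ℝ := max CJ 0 with hK
  have hKnn : (0:ℝ) ≤ K := le_max_right _ _
  have hbnd : ∀ n, ‖J (zn n)‖ ≤ K * c := by
    intro n
    calc ‖J (zn n)‖ ≤ CJ * ‖zn n‖ := hCJ _
      _ ≤ K * ‖zn n‖ := mul_le_mul_of_nonneg_right (le_max_left _ _) (norm_nonneg _)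
      _ ≤ K * c := mul_le_mul_of_nonneg_left (hzn1 n) hKnn
  have htend : ∀ u : X, Tendsto (fun n => J (zn n) u) atTop (𝓝 (T u)) := by
    intro u
    rw [Metric.tendsto_atTop]
    intro δ hδ
    set R : ℝ := K * c + ‖T‖ + 1 with hR
    have hRpos : 0 < R := by
      have h1 : 0 ≤ K * c := mul_nonneg hKnn hcpos.le
      have h2 : 0 ≤ ‖T‖ := norm_nonneg _
      linarith
    obtain ⟨k, hk⟩ := hv.exists_dist_lt u (show (0:ℝ) < δ / (4 * R) by positivity)
    obtain ⟨m, hm⟩ := exists_nat_gt (2 / δ)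
    have hmpos : 0 < (m : ℝ) := lt_trans (by positivity) hm
    refine ⟨max (k + 1) m, fun n hn => ?_⟩
    have hkn : k < n := lt_of_lt_of_le (Nat.lt_succ_self k) (le_trans (le_max_left _ _) hn)
    have hmn : (m : ℝ) ≤ (n : ℝ) := by
      exact_mod_cast le_trans (le_max_right (k+1) m) hn
    have herr : ‖J (zn n) (v k) - T (v k)‖ ≤ 1 / ((n : ℝ) + 1) := hzn2 n k hkn
    have herr2 : (1 : ℝ) / ((n : ℝ) + 1) < δ / 2 := by
      have h1 : (1:ℝ) / ((n:ℝ)+1) ≤ 1 / (m:ℝ) :=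
        one_div_le_one_div_of_le hmpos (by linarith)
      have h2 : (1:ℝ) / (m:ℝ) < δ / 2 := by
        rw [div_lt_iff₀ hmpos]
        rw [div_lt_iff₀ hδ] at hm
        linarith [mul_comm (δ/2) (m:ℝ)]
      linarith
    have hd1 : dist (J (zn n) u) (J (zn n) (v k)) ≤ (K * c) * (δ / (4 * R)) := by
      rw [dist_eq_norm, ← map_sub]
      calc ‖J (zn n) (u - v k)‖ ≤ ‖J (zn n)‖ * ‖u - v k‖ := (J (zn n)).le_opNorm _
        _ ≤ (K * c) * (δ / (4 * R)) := by
            refine mul_le_mul (hbnd n) ?_ (norm_nonneg _) (mul_nonneg hKnn hcpos.le)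
            rw [← dist_eq_norm]
            exact hk.le
    have hd3 : dist (T (v k)) (T u) ≤ ‖T‖ * (δ / (4 * R)) := by
      rw [dist_eq_norm, ← map_sub]
      calc ‖T (v k - u)‖ ≤ ‖T‖ * ‖v k - u‖ := T.le_opNorm _
        _ ≤ ‖T‖ * (δ / (4 * R)) := by
            refine mul_le_mul_of_nonneg_left ?_ (norm_nonneg _)
            rw [← dist_eq_norm, dist_comm]
            exact hk.le
    calc dist (J (zn n) u) (T u)
        ≤ dist (J (zn n) u) (J (zn n) (v k)) + dist (J (zn n) (v k)) (T (v k))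
            + dist (T (v k)) (T u) := dist_triangle4 _ _ _ _
      _ ≤ (K * c) * (δ / (4 * R)) + 1 / ((n : ℝ) + 1) + ‖T‖ * (δ / (4 * R)) := by
          have h2 : dist (J (zn n) (v k)) (T (v k)) ≤ 1 / ((n : ℝ) + 1) := by
            rw [dist_eq_norm]; exact herr
          linarith [hd1, hd3]
      _ ≤ R * (δ / (4 * R)) + 1 / ((n : ℝ) + 1) := by
          have : (K * c + ‖T‖) * (δ / (4 * R)) ≤ R * (δ / (4 * R)) := by
            refine mul_le_mul_of_nonneg_right (by rw [hR]; linarith) (by positivity)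
          linarith
      _ = δ / 4 + 1 / ((n : ℝ) + 1) := by
          field_simp
      _ < δ / 4 + δ / 2 := by linarith
      _ < δ := by linarith
  set w : ℕ → Z := fun n => c⁻¹ • zn n with hw
  have hw1 : ∀ n, ‖w n‖ ≤ 1 := by
    intro n
    rw [hw]
    rw [norm_smul, Real.norm_eq_abs, abs_of_pos (inv_pos.mpr hcpos)]
    rw [inv_mul_le_iff₀ hcpos, mul_one]
    exact hzn1 n
  have hw2 : ∀ u : X, Tendsto (fun n => J (w n) u) atTop (𝓝 ((c⁻¹ • T) u)) := by
    intro u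
    have heq : (fun n => J (w n) u) = fun n => c⁻¹ • (J (zn n) u) := by
      funext n
      rw [hw]
      rw [LinearMap.map_smul_of_tower]
      rfl
    rw [heq]
    have := (htend u).const_smul (c⁻¹ : ℝ)
    simpa using this
  obtain ⟨z₀, hz₀n, hz₀⟩ := hball w (c⁻¹ • T) hw1 hw2
  refine ⟨c • z₀, ?_, ?_⟩
  · rw [LinearMap.map_smul_of_tower, hz₀, smul_smul]
    rw [mul_inv_cancel₀ hcpos.ne', one_smul]
  · rw [norm_smul, Real.norm_eq_abs, abs_of_pos hcpos]
    calc c * ‖z₀‖ ≤ c * 1 := mul_le_mul_of_nonneg_left hz₀n hcpos.le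
      _ = I + ε₀ := by rw [mul_one]

/-- Let `X`, `Y` be separable Banach spaces and `Z` a Banach space continuously embedded in
`L(X,Y)` (via an injective linear map `J` with `‖Jz‖ ≤ C_J‖z‖_Z`).  If the closed unit ball
of `Z` is closed in `L(X,Y)` for the strong operator topology, then `Z` has the strong
convex compactness property: for every finite measure space `(Ω,Σ,μ)` and every bounded,
strongly measurable `f : Ω → Z`, the operator `T` with `Tx = ∫_Ω f(ω)x dμ(ω)` belongs to
`Z`, with `‖T‖_Z` at most the upper integral of `ω ↦ ‖f(ω)‖_Z`. -/
theorem stmt_4 {X Y Z : Type*}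
    [NormedAddCommGroup X] [NormedSpace ℂ X] [CompleteSpace X]
    [TopologicalSpace.SeparableSpace X]
    [NormedAddCommGroup Y] [NormedSpace ℂ Y] [CompleteSpace Y]
    [TopologicalSpace.SeparableSpace Y]
    [NormedAddCommGroup Z] [NormedSpace ℂ Z] [CompleteSpace Z]
    (J : Z →ₗ[ℂ] (X →L[ℂ] Y)) (hJinj : Function.Injective J)
    (CJ : ℝ) (hCJ : ∀ z : Z, ‖J z‖ ≤ CJ * ‖z‖)
    (hball : ∀ (z : ℕ → Z) (T : X →L[ℂ] Y), (∀ n, ‖z n‖ ≤ 1) →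
      (∀ v : X, Tendsto (fun n => J (z n) v) atTop (𝓝 (T v))) →
      ∃ z₀ : Z, ‖z₀‖ ≤ 1 ∧ J z₀ = T)
    {Ω : Type*} [MeasurableSpace Ω] (μ : Measure Ω) [IsFiniteMeasure μ]
    (f : Ω → Z) (Cf : ℝ) (hCf : ∀ ω, ‖f ω‖ ≤ Cf)
    (hmeas : ∀ v : X, AEStronglyMeasurable (fun ω => J (f ω) v) μ)
    (T : X →L[ℂ] Y) (hT : ∀ v : X, T v = ∫ ω, J (f ω) v ∂μ) :
    ∃ z : Z, J z = T ∧
      ∀ g : Ω → ℝ≥0∞, Measurable g → (∀ ω, (‖f ω‖₊ : ℝ≥0∞) ≤ g ω) →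
        (‖z‖₊ : ℝ≥0∞) ≤ ∫⁻ ω, g ω ∂μ := by
  by_cases hΩ : Nonempty Ω
  · obtain ⟨ω₀⟩ := hΩ
    set g₀ : Ω → ℝ≥0∞ := fun _ => ENNReal.ofReal (max Cf 0) with hg₀def
    have hg₀ : Measurable g₀ := measurable_const
    have hfg₀ : ∀ ω, (‖f ω‖₊ : ℝ≥0∞) ≤ g₀ ω := by
      intro ω
      rw [show (‖f ω‖₊ : ℝ≥0∞) = ENNReal.ofReal ‖f ω‖ from (ofReal_norm _).symm]
      exact ENNReal.ofReal_le_ofReal ((hCf ω).trans (le_max_left _ _))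
    have hg₀fin : ∫⁻ ω, g₀ ω ∂μ ≠ ∞ := by
      rw [hg₀def, lintegral_const]
      exact ENNReal.mul_ne_top ENNReal.ofReal_ne_top (measure_ne_top μ _)
    obtain ⟨z₁, hz₁T, -⟩ := auxB J CJ hCJ hball μ f hmeas T hT g₀ hg₀ hfg₀ hg₀fin ω₀ one_pos
    refine ⟨z₁, hz₁T, ?_⟩
    intro g hgm hgd
    rcases eq_or_ne (∫⁻ ω, g ω ∂μ) ∞ with hfin | hfin
    · rw [hfin]; exact le_top
    · have key : ‖z₁‖ ≤ (∫⁻ ω, g ω ∂μ).toReal := by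
        refine le_of_forall_pos_le_add fun ε hε => ?_
        obtain ⟨z₂, hz₂T, hz₂n⟩ := auxB J CJ hCJ hball μ f hmeas T hT g hgm hgd hfin ω₀ hε
        have heq : z₂ = z₁ := hJinj (by rw [hz₂T, hz₁T])
        rwa [heq] at hz₂n
      calc (‖z₁‖₊ : ℝ≥0∞) = ENNReal.ofReal ‖z₁‖ := (ofReal_norm _).symm
        _ ≤ ENNReal.ofReal ((∫⁻ ω, g ω ∂μ).toReal) := ENNReal.ofReal_le_ofReal key
        _ = ∫⁻ ω, g ω ∂μ := ENNReal.ofReal_toReal hfin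
  · haveI : IsEmpty Ω := not_nonempty_iff.mp hΩ
    have hμ : μ = 0 := μ.eq_zero_of_isEmpty
    have hT0 : T = 0 := by
      ext u
      rw [hT u, hμ]
      simp
    refine ⟨0, ?_, ?_⟩
    · rw [map_zero, hT0]
    · intro g _ _
      simp
end

section
/- For Borel sets σ₁, σ₂ ⊆ ℂ, the class 𝔄(σ₁×σ₂) of functions admitting integral factorizations, equipped with its natural norm, is a unital Banach algebra contractively included in the bounded Borel functions B(σ₁×σ₂): it is closed under products with ‖φψ‖_𝔄 ≤ ‖φ‖_𝔄 ‖ψ‖_𝔄, contains the constant 1 with norm 1, and ‖φ‖_∞ ≤ ‖φ‖_𝔄. -/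
open MeasureTheory Function

/-- `φ` admits, on `σ₁ × σ₂`, a factorization `φ(λ₁,λ₂) = ∫_Ω a₁(λ₁,ω)a₂(λ₂,ω) dμ(ω)` over
the finite measure space `(Ω,μ)`, with bounded jointly measurable `a₁, a₂` and measurable
dominating functions `c₁(ω) ≥ ‖a₁(·,ω)‖_{B(σ₁)}`, `c₂(ω) ≥ ‖a₂(·,ω)‖_{B(σ₂)}` whose product
integrates to at most `r`. -/
def ARepOn (σ₁ σ₂ : Set ℂ) (φ : ℂ → ℂ → ℂ) (r : ℝ) (Ω : Type) [MeasurableSpace Ω]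
    (μ : Measure Ω) : Prop :=
  IsFiniteMeasure μ ∧
  ∃ (a₁ a₂ : ℂ → Ω → ℂ) (c₁ c₂ : Ω → ℝ),
    Measurable (uncurry a₁) ∧ Measurable (uncurry a₂) ∧
    (∃ C : ℝ, ∀ z ω, ‖a₁ z ω‖ ≤ C) ∧ (∃ C : ℝ, ∀ z ω, ‖a₂ z ω‖ ≤ C) ∧
    Measurable c₁ ∧ Measurable c₂ ∧
    (∀ z ∈ σ₁, ∀ ω, ‖a₁ z ω‖ ≤ c₁ ω) ∧ (∀ z ∈ σ₂, ∀ ω, ‖a₂ z ω‖ ≤ c₂ ω) ∧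
    (∀ z₁ ∈ σ₁, ∀ z₂ ∈ σ₂, φ z₁ z₂ = ∫ ω, a₁ z₁ ω * a₂ z₂ ω ∂μ) ∧
    Integrable (fun ω => c₁ ω * c₂ ω) μ ∧
    ∫ ω, c₁ ω * c₂ ω ∂μ ≤ r

/-- `φ ∈ 𝔄(σ₁ × σ₂)` with witnessed bound `r`. -/
def ARep (σ₁ σ₂ : Set ℂ) (φ : ℂ → ℂ → ℂ) (r : ℝ) : Prop :=
  ∃ (Ω : Type) (m : MeasurableSpace Ω) (μ : @Measure Ω m), @ARepOn σ₁ σ₂ φ r Ω m μ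

/-- Membership in `𝔄(σ₁ × σ₂)`. -/
def MemA (σ₁ σ₂ : Set ℂ) (φ : ℂ → ℂ → ℂ) : Prop := ∃ r : ℝ, ARep σ₁ σ₂ φ r

/-- The norm `‖φ‖_{𝔄(σ₁×σ₂)}`: the infimum over all representations. -/
noncomputable def ANorm (σ₁ σ₂ : Set ℂ) (φ : ℂ → ℂ → ℂ) : ℝ :=
  sInf {r : ℝ | ARep σ₁ σ₂ φ r}


open MeasureTheory Function

section Aux

lemma mEmb_inl {α β : Type*} [MeasurableSpace α] [MeasurableSpace β] :
    MeasurableEmbedding (Sum.inl : α → α ⊕ β) :=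
  ⟨Sum.inl_injective, measurable_inl, fun _ hs => hs.inl_image⟩

lemma mEmb_inr {α β : Type*} [MeasurableSpace α] [MeasurableSpace β] :
    MeasurableEmbedding (Sum.inr : β → α ⊕ β) :=
  ⟨Sum.inr_injective, measurable_inr, fun _ hs => hs.inr_image⟩

lemma integrable_pointmul {Ω : Type} [MeasurableSpace Ω] {μ : Measure Ω} [IsFiniteMeasure μ]
    {a₁ a₂ : ℂ → Ω → ℂ} (ha₁ : Measurable (uncurry a₁)) (ha₂ : Measurable (uncurry a₂))
    {C₁ C₂ : ℝ} (hC₁ : ∀ z ω, ‖a₁ z ω‖ ≤ C₁) (hC₂ : ∀ z ω, ‖a₂ z ω‖ ≤ C₂) (z₁ z₂ : ℂ) :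
    Integrable (fun ω => a₁ z₁ ω * a₂ z₂ ω) μ := by
  have hm : Measurable (fun ω => a₁ z₁ ω * a₂ z₂ ω) :=
    (ha₁.comp measurable_prodMk_left).mul (ha₂.comp measurable_prodMk_left)
  refine (integrable_const (C₁ * C₂)).mono' hm.aestronglyMeasurable (ae_of_all _ fun ω => ?_)
  rw [norm_mul]
  exact mul_le_mul (hC₁ z₁ ω) (hC₂ z₂ ω) (norm_nonneg _) ((norm_nonneg _).trans (hC₁ z₁ ω))

lemma ARep_point_bound {σ₁ σ₂ : Set ℂ} {φ : ℂ → ℂ → ℂ} {r : ℝ} (h : ARep σ₁ σ₂ φ r)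
    {z₁ : ℂ} (hz₁ : z₁ ∈ σ₁) {z₂ : ℂ} (hz₂ : z₂ ∈ σ₂) : ‖φ z₁ z₂‖ ≤ r := by
  obtain ⟨Ω, m, μ, hfin, a₁, a₂, c₁, c₂, ha₁, ha₂, ⟨C₁, hC₁⟩, ⟨C₂, hC₂⟩, hc₁, hc₂, hb₁, hb₂,
    hrep, hint, hle⟩ := h
  haveI := hfin
  have hintf : Integrable (fun ω => a₁ z₁ ω * a₂ z₂ ω) μ :=
    integrable_pointmul ha₁ ha₂ hC₁ hC₂ z₁ z₂
  rw [hrep z₁ hz₁ z₂ hz₂]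
  calc ‖∫ ω, a₁ z₁ ω * a₂ z₂ ω ∂μ‖ ≤ ∫ ω, ‖a₁ z₁ ω * a₂ z₂ ω‖ ∂μ :=
        norm_integral_le_integral_norm _
    _ ≤ ∫ ω, c₁ ω * c₂ ω ∂μ := by
        refine integral_mono hintf.norm hint fun ω => ?_
        rw [norm_mul]
        exact mul_le_mul (hb₁ z₁ hz₁ ω) (hb₂ z₂ hz₂ ω) (norm_nonneg _)
          ((norm_nonneg _).trans (hb₁ z₁ hz₁ ω))
    _ ≤ r := hle

lemma ARep_nonneg {σ₁ σ₂ : Set ℂ} (h₁ : σ₁.Nonempty) (h₂ : σ₂.Nonempty)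
    {φ : ℂ → ℂ → ℂ} {r : ℝ} (h : ARep σ₁ σ₂ φ r) : 0 ≤ r := by
  obtain ⟨z₁, hz₁⟩ := h₁; obtain ⟨z₂, hz₂⟩ := h₂
  exact (norm_nonneg _).trans (ARep_point_bound h hz₁ hz₂)

lemma ARep_add {σ₁ σ₂ : Set ℂ} {φ ψ : ℂ → ℂ → ℂ} {r s : ℝ}
    (hφ : ARep σ₁ σ₂ φ r) (hψ : ARep σ₁ σ₂ ψ s) :
    ARep σ₁ σ₂ (fun z₁ z₂ => φ z₁ z₂ + ψ z₁ z₂) (r + s) := by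
  obtain ⟨Ω₁, m₁, μ, hfinμ, a₁, a₂, c₁, c₂, ha₁, ha₂, ⟨C₁, hC₁⟩, ⟨C₂, hC₂⟩, hc₁, hc₂, hb₁, hb₂,
    hrepφ, hintφ, hleφ⟩ := hφ
  obtain ⟨Ω₂, m₂, ν, hfinν, b₁, b₂, d₁, d₂, hB₁, hB₂, ⟨D₁, hD₁⟩, ⟨D₂, hD₂⟩, hd₁, hd₂, he₁, he₂,
    hrepψ, hintψ, hleψ⟩ := hψ
  haveI := hfinμ; haveI := hfinν
  haveI := μ.isFiniteMeasure_map (Sum.inl : Ω₁ → Ω₁ ⊕ Ω₂)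
  haveI := ν.isFiniteMeasure_map (Sum.inr : Ω₂ → Ω₁ ⊕ Ω₂)
  refine ⟨Ω₁ ⊕ Ω₂, inferInstance, μ.map Sum.inl + ν.map Sum.inr, inferInstance,
    fun z => Sum.elim (a₁ z) (b₁ z), fun z => Sum.elim (a₂ z) (b₂ z),
    Sum.elim c₁ d₁, Sum.elim c₂ d₂, ?_, ?_, ?_, ?_, ?_, ?_, ?_, ?_, ?_, ?_, ?_⟩
  · have h : uncurry (fun z => Sum.elim (a₁ z) (b₁ z)) =
        (Sum.elim (uncurry a₁) (uncurry b₁)) ∘ (MeasurableEquiv.prodSumDistrib ℂ Ω₁ Ω₂) := by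
      funext p; obtain ⟨z, ω⟩ := p; cases ω <;> rfl
    rw [h]
    exact (ha₁.sumElim hB₁).comp (MeasurableEquiv.measurable _)
  · have h : uncurry (fun z => Sum.elim (a₂ z) (b₂ z)) =
        (Sum.elim (uncurry a₂) (uncurry b₂)) ∘ (MeasurableEquiv.prodSumDistrib ℂ Ω₁ Ω₂) := by
      funext p; obtain ⟨z, ω⟩ := p; cases ω <;> rfl
    rw [h]
    exact (ha₂.sumElim hB₂).comp (MeasurableEquiv.measurable _)
  · exact ⟨max C₁ D₁, fun z ω => by
      cases ω with
      | inl ω => exact (hC₁ z ω).trans (le_max_left _ _)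
      | inr ω => exact (hD₁ z ω).trans (le_max_right _ _)⟩
  · exact ⟨max C₂ D₂, fun z ω => by
      cases ω with
      | inl ω => exact (hC₂ z ω).trans (le_max_left _ _)
      | inr ω => exact (hD₂ z ω).trans (le_max_right _ _)⟩
  · exact hc₁.sumElim hd₁
  · exact hc₂.sumElim hd₂
  · intro z hz ω
    cases ω with
    | inl ω => exact hb₁ z hz ω
    | inr ω => exact he₁ z hz ω
  · intro z hz ω
    cases ω with
    | inl ω => exact hb₂ z hz ω
    | inr ω => exact he₂ z hz ω
  · intro z₁ hz₁ z₂ hz₂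
    show φ z₁ z₂ + ψ z₁ z₂ = _
    have hi1 : Integrable (fun ω => Sum.elim (a₁ z₁) (b₁ z₁) ω * Sum.elim (a₂ z₂) (b₂ z₂) ω)
        (μ.map Sum.inl) := by
      rw [mEmb_inl.integrable_map_iff]
      exact integrable_pointmul ha₁ ha₂ hC₁ hC₂ z₁ z₂
    have hi2 : Integrable (fun ω => Sum.elim (a₁ z₁) (b₁ z₁) ω * Sum.elim (a₂ z₂) (b₂ z₂) ω)
        (ν.map Sum.inr) := by
      rw [mEmb_inr.integrable_map_iff]
      exact integrable_pointmul hB₁ hB₂ hD₁ hD₂ z₁ z₂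
    rw [integral_add_measure hi1 hi2, mEmb_inl.integral_map, mEmb_inr.integral_map,
      hrepφ z₁ hz₁ z₂ hz₂, hrepψ z₁ hz₁ z₂ hz₂]
    rfl
  · refine Integrable.add_measure ?_ ?_
    · rw [mEmb_inl.integrable_map_iff]; exact hintφ
    · rw [mEmb_inr.integrable_map_iff]; exact hintψ
  · have h1 : Integrable (fun ω => Sum.elim c₁ d₁ ω * Sum.elim c₂ d₂ ω) (μ.map Sum.inl) := by
      rw [mEmb_inl.integrable_map_iff]; exact hintφ
    have h2 : Integrable (fun ω => Sum.elim c₁ d₁ ω * Sum.elim c₂ d₂ ω) (ν.map Sum.inr) := by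
      rw [mEmb_inr.integrable_map_iff]; exact hintψ
    rw [integral_add_measure h1 h2, mEmb_inl.integral_map, mEmb_inr.integral_map]
    exact add_le_add hleφ hleψ

end Aux

section Aux2

lemma ARep_mul {σ₁ σ₂ : Set ℂ} (h₁ : σ₁.Nonempty) (h₂ : σ₂.Nonempty)
    {φ ψ : ℂ → ℂ → ℂ} {r s : ℝ}
    (hφ : ARep σ₁ σ₂ φ r) (hψ : ARep σ₁ σ₂ ψ s) :
    ARep σ₁ σ₂ (fun z₁ z₂ => φ z₁ z₂ * ψ z₁ z₂) (r * s) := by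
  obtain ⟨Ω₁, m₁, μ, hfinμ, a₁, a₂, c₁, c₂, ha₁, ha₂, ⟨C₁, hC₁⟩, ⟨C₂, hC₂⟩, hc₁, hc₂, hb₁, hb₂,
    hrepφ, hintφ, hleφ⟩ := hφ
  obtain ⟨Ω₂, m₂, ν, hfinν, b₁, b₂, d₁, d₂, hB₁, hB₂, ⟨D₁, hD₁⟩, ⟨D₂, hD₂⟩, hd₁, hd₂, he₁, he₂,
    hrepψ, hintψ, hleψ⟩ := hψ
  haveI := hfinμ; haveI := hfinν
  have hc₁0 : ∀ ω, 0 ≤ c₁ ω := fun ω => (norm_nonneg _).trans (hb₁ _ h₁.choose_spec ω)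
  have hc₂0 : ∀ ω, 0 ≤ c₂ ω := fun ω => (norm_nonneg _).trans (hb₂ _ h₂.choose_spec ω)
  have hd₁0 : ∀ ω, 0 ≤ d₁ ω := fun ω => (norm_nonneg _).trans (he₁ _ h₁.choose_spec ω)
  have hd₂0 : ∀ ω, 0 ≤ d₂ ω := fun ω => (norm_nonneg _).trans (he₂ _ h₂.choose_spec ω)
  refine ⟨Ω₁ × Ω₂, inferInstance, μ.prod ν, inferInstance,
    fun z p => a₁ z p.1 * b₁ z p.2, fun z p => a₂ z p.1 * b₂ z p.2,
    fun p => c₁ p.1 * d₁ p.2, fun p => c₂ p.1 * d₂ p.2, ?_, ?_, ?_, ?_, ?_, ?_, ?_, ?_, ?_, ?_, ?_⟩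
  · exact (ha₁.comp (measurable_fst.prodMk measurable_snd.fst)).mul
      (hB₁.comp (measurable_fst.prodMk measurable_snd.snd))
  · exact (ha₂.comp (measurable_fst.prodMk measurable_snd.fst)).mul
      (hB₂.comp (measurable_fst.prodMk measurable_snd.snd))
  · refine ⟨max C₁ 0 * max D₁ 0, fun z p => ?_⟩
    rw [norm_mul]
    exact mul_le_mul ((hC₁ z p.1).trans (le_max_left _ _))
      ((hD₁ z p.2).trans (le_max_left _ _)) (norm_nonneg _) (le_max_right _ _)
  · refine ⟨max C₂ 0 * max D₂ 0, fun z p => ?_⟩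
    rw [norm_mul]
    exact mul_le_mul ((hC₂ z p.1).trans (le_max_left _ _))
      ((hD₂ z p.2).trans (le_max_left _ _)) (norm_nonneg _) (le_max_right _ _)
  · exact (hc₁.comp measurable_fst).mul (hd₁.comp measurable_snd)
  · exact (hc₂.comp measurable_fst).mul (hd₂.comp measurable_snd)
  · intro z hz p
    rw [norm_mul]
    exact mul_le_mul (hb₁ z hz p.1) (he₁ z hz p.2) (norm_nonneg _) (hc₁0 p.1)
  · intro z hz p
    rw [norm_mul]
    exact mul_le_mul (hb₂ z hz p.1) (he₂ z hz p.2) (norm_nonneg _) (hc₂0 p.1)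
  · intro z₁ hz₁ z₂ hz₂
    have h : (fun p : Ω₁ × Ω₂ => (a₁ z₁ p.1 * b₁ z₁ p.2) * (a₂ z₂ p.1 * b₂ z₂ p.2)) =
        fun p : Ω₁ × Ω₂ => (fun ω => a₁ z₁ ω * a₂ z₂ ω) p.1 * (fun ω => b₁ z₁ ω * b₂ z₂ ω) p.2 :=
      funext fun p => mul_mul_mul_comm _ _ _ _
    calc (fun z₁ z₂ => φ z₁ z₂ * ψ z₁ z₂) z₁ z₂
        = (∫ ω, a₁ z₁ ω * a₂ z₂ ω ∂μ) * ∫ ω, b₁ z₁ ω * b₂ z₂ ω ∂ν := by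
          show φ z₁ z₂ * ψ z₁ z₂ = _
          rw [hrepφ z₁ hz₁ z₂ hz₂, hrepψ z₁ hz₁ z₂ hz₂]
      _ = ∫ p, (fun ω => a₁ z₁ ω * a₂ z₂ ω) p.1 * (fun ω => b₁ z₁ ω * b₂ z₂ ω) p.2 ∂μ.prod ν :=
          (integral_prod_mul (μ := μ) (ν := ν) (fun ω => a₁ z₁ ω * a₂ z₂ ω) (fun ω => b₁ z₁ ω * b₂ z₂ ω)).symm
      _ = ∫ p, (a₁ z₁ p.1 * b₁ z₁ p.2) * (a₂ z₂ p.1 * b₂ z₂ p.2) ∂μ.prod ν := by rw [← h]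
  · have h : (fun p : Ω₁ × Ω₂ => (c₁ p.1 * d₁ p.2) * (c₂ p.1 * d₂ p.2)) =
        fun p : Ω₁ × Ω₂ => (fun ω => c₁ ω * c₂ ω) p.1 * (fun ω => d₁ ω * d₂ ω) p.2 :=
      funext fun p => mul_mul_mul_comm _ _ _ _
    simp only
    rw [h]
    exact hintφ.mul_prod hintψ
  · have h : (fun p : Ω₁ × Ω₂ => (c₁ p.1 * d₁ p.2) * (c₂ p.1 * d₂ p.2)) =
        fun p : Ω₁ × Ω₂ => (fun ω => c₁ ω * c₂ ω) p.1 * (fun ω => d₁ ω * d₂ ω) p.2 :=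
      funext fun p => mul_mul_mul_comm _ _ _ _
    calc ∫ p, (c₁ p.1 * d₁ p.2) * (c₂ p.1 * d₂ p.2) ∂μ.prod ν
        = ∫ p, (fun ω => c₁ ω * c₂ ω) p.1 * (fun ω => d₁ ω * d₂ ω) p.2 ∂μ.prod ν := by rw [h]
      _ = (∫ ω, c₁ ω * c₂ ω ∂μ) * ∫ ω, d₁ ω * d₂ ω ∂ν := integral_prod_mul (μ := μ) (ν := ν) (fun ω => c₁ ω * c₂ ω) (fun ω => d₁ ω * d₂ ω)
      _ ≤ r * s := ?_
    have h10 : 0 ≤ ∫ ω, c₁ ω * c₂ ω ∂μ :=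
      integral_nonneg fun ω => mul_nonneg (hc₁0 ω) (hc₂0 ω)
    have h20 : 0 ≤ ∫ ω, d₁ ω * d₂ ω ∂ν :=
      integral_nonneg fun ω => mul_nonneg (hd₁0 ω) (hd₂0 ω)
    exact mul_le_mul hleφ hleψ h20 (h10.trans hleφ)

lemma ARep_one (σ₁ σ₂ : Set ℂ) : ARep σ₁ σ₂ (fun _ _ => 1) 1 := by
  refine ⟨Unit, inferInstance, Measure.dirac (), inferInstance,
    fun _ _ => 1, fun _ _ => 1, fun _ => 1, fun _ => 1,
    measurable_const, measurable_const, ⟨1, fun _ _ => by simp⟩, ⟨1, fun _ _ => by simp⟩,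
    measurable_const, measurable_const, fun _ _ _ => by simp, fun _ _ _ => by simp,
    fun _ _ _ _ => by simp, by simp [integrable_const], by simp⟩

lemma le_sInf_mul_sInf {S T : Set ℝ} {A : ℝ} (hS : S.Nonempty) (hT : T.Nonempty)
    (hS0 : ∀ r ∈ S, 0 ≤ r) (hT0 : ∀ s ∈ T, 0 ≤ s)
    (h : ∀ r ∈ S, ∀ s ∈ T, A ≤ r * s) : A ≤ sInf S * sInf T := by
  have hTb : BddBelow T := ⟨0, hT0⟩
  have hSb : BddBelow S := ⟨0, hS0⟩
  have hT0' : 0 ≤ sInf T := le_csInf hT hT0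
  have key : ∀ r ∈ S, A ≤ r * sInf T := by
    intro r hr
    rcases eq_or_lt_of_le (hS0 r hr) with h0 | h0
    · obtain ⟨s, hs⟩ := hT
      have := h r hr s hs
      rw [← h0] at this ⊢
      simpa using this
    · rw [← div_le_iff₀' h0]
      exact le_csInf hT fun s hs => (div_le_iff₀' h0).2 (h r hr s hs)
  rcases eq_or_lt_of_le hT0' with h0 | h0
  · obtain ⟨r, hr⟩ := hS
    have := key r hr
    rw [← h0] at this ⊢
    simpa using this
  · rw [← div_le_iff₀ h0]
    exact le_csInf hS fun r hr => (div_le_iff₀ h0).2 (key r hr)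

end Aux2

/-- For Borel sets `σ₁, σ₂ ⊆ ℂ`, the class `𝔄(σ₁×σ₂)` with its natural norm is a unital
Banach algebra contractively included in `B(σ₁×σ₂)`: it is closed under sums and products
with `‖φ+ψ‖_𝔄 ≤ ‖φ‖_𝔄 + ‖ψ‖_𝔄` and `‖φψ‖_𝔄 ≤ ‖φ‖_𝔄‖ψ‖_𝔄`, contains the constant
function `1` with norm `1`, and satisfies `‖φ‖_∞ ≤ ‖φ‖_𝔄`. -/
theorem stmt_8 (σ₁ σ₂ : Set ℂ) (hσ₁m : MeasurableSet σ₁) (hσ₂m : MeasurableSet σ₂)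
    (h₁ : σ₁.Nonempty) (h₂ : σ₂.Nonempty) :
    (∀ φ ψ : ℂ → ℂ → ℂ, MemA σ₁ σ₂ φ → MemA σ₁ σ₂ ψ →
      MemA σ₁ σ₂ (fun z₁ z₂ => φ z₁ z₂ + ψ z₁ z₂) ∧
      ANorm σ₁ σ₂ (fun z₁ z₂ => φ z₁ z₂ + ψ z₁ z₂) ≤ ANorm σ₁ σ₂ φ + ANorm σ₁ σ₂ ψ) ∧
    (∀ φ ψ : ℂ → ℂ → ℂ, MemA σ₁ σ₂ φ → MemA σ₁ σ₂ ψ →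
      MemA σ₁ σ₂ (fun z₁ z₂ => φ z₁ z₂ * ψ z₁ z₂) ∧
      ANorm σ₁ σ₂ (fun z₁ z₂ => φ z₁ z₂ * ψ z₁ z₂) ≤ ANorm σ₁ σ₂ φ * ANorm σ₁ σ₂ ψ) ∧
    (MemA σ₁ σ₂ (fun _ _ => 1) ∧ ANorm σ₁ σ₂ (fun _ _ => 1) = 1) ∧
    (∀ φ : ℂ → ℂ → ℂ, MemA σ₁ σ₂ φ →
      ∀ z₁ ∈ σ₁, ∀ z₂ ∈ σ₂, ‖φ z₁ z₂‖ ≤ ANorm σ₁ σ₂ φ) := by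
  have hbdd : ∀ φ : ℂ → ℂ → ℂ, BddBelow {r : ℝ | ARep σ₁ σ₂ φ r} :=
    fun φ => ⟨0, fun r hr => ARep_nonneg h₁ h₂ hr⟩
  have hANorm_le : ∀ (φ : ℂ → ℂ → ℂ) (r : ℝ), ARep σ₁ σ₂ φ r → ANorm σ₁ σ₂ φ ≤ r :=
    fun φ r hr => csInf_le (hbdd φ) hr
  have hpt : ∀ φ : ℂ → ℂ → ℂ, MemA σ₁ σ₂ φ → ∀ z₁ ∈ σ₁, ∀ z₂ ∈ σ₂, ‖φ z₁ z₂‖ ≤ ANorm σ₁ σ₂ φ :=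
    fun φ hφ z₁ hz₁ z₂ hz₂ => le_csInf hφ fun r hr => ARep_point_bound hr hz₁ hz₂
  refine ⟨?_, ?_, ⟨⟨1, ARep_one σ₁ σ₂⟩, ?_⟩, hpt⟩
  · intro φ ψ hφ hψ
    constructor
    · obtain ⟨r, hr⟩ := hφ; obtain ⟨s, hs⟩ := hψ
      exact ⟨r + s, ARep_add hr hs⟩
    · set A := ANorm σ₁ σ₂ (fun z₁ z₂ => φ z₁ z₂ + ψ z₁ z₂) with hA
      have key : ∀ r ∈ {r : ℝ | ARep σ₁ σ₂ φ r}, ∀ s ∈ {s : ℝ | ARep σ₁ σ₂ ψ s},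
          A ≤ r + s := fun r hr s hs => hANorm_le _ _ (ARep_add hr hs)
      have h2 : ∀ r ∈ {r : ℝ | ARep σ₁ σ₂ φ r}, A - r ≤ ANorm σ₁ σ₂ ψ :=
        fun r hr => le_csInf hψ fun s hs => sub_le_iff_le_add'.2 (key r hr s hs)
      have h3 : A - ANorm σ₁ σ₂ ψ ≤ ANorm σ₁ σ₂ φ :=
        le_csInf hφ fun r hr => by linarith [h2 r hr]
      linarith
  · intro φ ψ hφ hψ
    constructor
    · obtain ⟨r, hr⟩ := hφ; obtain ⟨s, hs⟩ := hψ
      exact ⟨r * s, ARep_mul h₁ h₂ hr hs⟩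
    · exact le_sInf_mul_sInf hφ hψ (fun r hr => ARep_nonneg h₁ h₂ hr)
        (fun s hs => ARep_nonneg h₁ h₂ hs)
        (fun r hr s hs => hANorm_le _ _ (ARep_mul h₁ h₂ hr hs))
  · refine le_antisymm (hANorm_le _ 1 (ARep_one σ₁ σ₂)) ?_
    have := hpt _ ⟨1, ARep_one σ₁ σ₂⟩ _ h₁.choose_spec _ h₂.choose_spec
    simpa using this
end

section
/- Let X and Y be finite-dimensional complex normed spaces with bases {e₁,…,eₙ} of X and {f₁,…,fₙ} of Y, and associated coordinate projections P_j ∈ L(X), Q_k ∈ L(Y). Let A = U^{-1}(Σ_j λ_j P_j)U with U ∈ L(X) invertible and B = V^{-1}(Σ_k μ_k Q_k)V with V ∈ L(Y) invertible, where λ_j, μ_k ∈ ℂ. Let f : ℂ → ℂ and define f(A) = U^{-1}(Σ_j f(λ_j)P_j)U and f(B) = V^{-1}(Σ_k f(μ_k)Q_k)V. Then for every S ∈ L(X,Y), f(B)S − Sf(A) = V^{-1} ( Σ_{j,k : λ_j ≠ μ_k} ((f(μ_k)−f(λ_j))/(μ_k−λ_j)) Q_k V(BS−SA)U^{-1} P_j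 ) U. -/
open Matrix


lemma key_sum {n : ℕ} (lam mu : Fin n → ℂ) (f : ℂ → ℂ) (T : Matrix (Fin n) (Fin n) ℂ) :
    (∑ j : Fin n, ∑ k : Fin n,
        if lam j ≠ mu k then
          ((f (mu k) - f (lam j)) / (mu k - lam j)) •
            (Matrix.single k k 1 * (Matrix.diagonal mu * T - T * Matrix.diagonal lam) *
              Matrix.single j j 1)
        else 0) =
    Matrix.diagonal (fun k => f (mu k)) * T - T * Matrix.diagonal (fun j => f (lam j)) := by
  ext a b
  have h1 : ∀ (k j : Fin n) (M : Matrix (Fin n) (Fin n) ℂ),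
      ((Matrix.single k k 1 * M * Matrix.single j j 1 :
          Matrix (Fin n) (Fin n) ℂ)) a b = if a = k ∧ b = j then M k j else 0 := by
    intro k j M
    rw [Matrix.mul_apply]
    simp only [Matrix.mul_apply, Matrix.single, Matrix.of_apply, ite_and]
    rcases eq_or_ne a k with rfl | hak
    · rcases eq_or_ne b j with rfl | hbj
      · simp [Finset.sum_ite_eq, Finset.sum_ite_eq']
      · simp [Finset.sum_ite_eq, Finset.sum_ite_eq', Ne.symm hbj, hbj]
    · simp [Ne.symm hak, hak]
  have h3 : ∀ j k : Fin n,
      ((if lam j ≠ mu k then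
          ((f (mu k) - f (lam j)) / (mu k - lam j)) •
            (Matrix.single k k 1 * (Matrix.diagonal mu * T - T * Matrix.diagonal lam) *
              Matrix.single j j 1)
        else 0 : Matrix (Fin n) (Fin n) ℂ)) a b
      = if lam j = mu k then (0:ℂ)
        else ((f (mu k) - f (lam j)) / (mu k - lam j)) •
          (if a = k ∧ b = j then (Matrix.diagonal mu * T - T * Matrix.diagonal lam) k j else 0) := by
    intro j k
    rcases eq_or_ne (lam j) (mu k) with h | h
    · simp [h]
    · rw [if_pos h, if_neg h, Matrix.smul_apply, h1]
  simp only [Matrix.sum_apply]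
  rw [Finset.sum_congr rfl (fun j _ => Finset.sum_congr rfl (fun k _ => h3 j k)), Finset.sum_comm]
  have h2 : ∀ k : Fin n, (∑ j : Fin n,
      if lam j = mu k then (0:ℂ)
      else ((f (mu k) - f (lam j)) / (mu k - lam j)) •
        (if a = k ∧ b = j then (Matrix.diagonal mu * T - T * Matrix.diagonal lam) k j else 0))
      = if a = k then (f (mu k) - f (lam b)) * T a b else 0 := by
    intro k
    rcases eq_or_ne a k with rfl | hak
    · rw [if_pos rfl, Finset.sum_eq_single b]
      · rcases eq_or_ne (lam b) (mu a) with h | h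
        · simp [h]
        · have hd : mu a - lam b ≠ 0 := sub_ne_zero.mpr (Ne.symm h)
          rw [if_neg h, if_pos ⟨rfl, rfl⟩]
          simp only [Matrix.sub_apply, Matrix.diagonal_mul, Matrix.mul_diagonal, smul_eq_mul]
          field_simp
      · intro j _ hj
        split
        · rfl
        · rw [if_neg (by simp [Ne.symm hj]), smul_zero]
      · simp
    · rw [if_neg hak, Finset.sum_eq_zero]
      intro j _
      split
      · rfl
      · rw [if_neg (by simp [hak]), smul_zero]
  rw [Finset.sum_congr rfl (fun k _ => h2 k)]
  simp [Matrix.sub_apply, Matrix.diagonal_mul, Matrix.mul_diagonal, Finset.sum_ite_eq,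
    Finset.sum_ite_eq']
  ring

/-- Let `A = U⁻¹ diag(λ) U` and `B = V⁻¹ diag(μ) V` be diagonalizable operators on
finite-dimensional spaces (with coordinate projections `P_j = E_{jj}`, `Q_k = E_{kk}`),
and set `f(A) = U⁻¹ diag(f∘λ) U`, `f(B) = V⁻¹ diag(f∘μ) V`.  Then for every `S`,
`f(B)S − Sf(A)` equals
`V⁻¹ (Σ_{j,k : λ_j ≠ μ_k} ((f(μ_k)−f(λ_j))/(μ_k−λ_j)) Q_k (V(BS−SA)U⁻¹) P_j) U`. -/
theorem stmt_9 {n : ℕ} (U U' V V' : Matrix (Fin n) (Fin n) ℂ)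
    (hU : U * U' = 1) (hU' : U' * U = 1) (hV : V * V' = 1) (hV' : V' * V = 1)
    (lam mu : Fin n → ℂ) (f : ℂ → ℂ) (S : Matrix (Fin n) (Fin n) ℂ)
    (A B fA fB : Matrix (Fin n) (Fin n) ℂ)
    (hA : A = U' * Matrix.diagonal lam * U)
    (hB : B = V' * Matrix.diagonal mu * V)
    (hfA : fA = U' * Matrix.diagonal (fun j => f (lam j)) * U)
    (hfB : fB = V' * Matrix.diagonal (fun k => f (mu k)) * V) :
    fB * S - S * fA =
      V' * (∑ j : Fin n, ∑ k : Fin n,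
        if lam j ≠ mu k then
          ((f (mu k) - f (lam j)) / (mu k - lam j)) •
            (Matrix.single k k 1 * (V * (B * S - S * A) * U') *
              Matrix.single j j 1)
        else 0) * U := by
  subst hA hB hfA hfB
  have hT : V * ((V' * Matrix.diagonal mu * V) * S - S * (U' * Matrix.diagonal lam * U)) * U'
      = Matrix.diagonal mu * (V * S * U') - (V * S * U') * Matrix.diagonal lam := by
    simp only [Matrix.mul_sub, Matrix.sub_mul, ← Matrix.mul_assoc]
    rw [hV, Matrix.one_mul, Matrix.mul_assoc (V * S * U' * Matrix.diagonal lam) U U', hU,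
      Matrix.mul_one]
  rw [hT, key_sum]
  simp only [Matrix.mul_sub, Matrix.sub_mul, ← Matrix.mul_assoc]
  rw [Matrix.mul_assoc (V' * Matrix.diagonal (fun k => f (mu k)) * V * S) U' U, hU',
    Matrix.mul_one, Matrix.mul_assoc V' V S, ← Matrix.mul_assoc V' V, hV', Matrix.one_mul]
end

section
/- Let 1 < p < ∞ with conjugate exponent p* (1/p + 1/p* = 1), and let S = {s_{jk}} be an infinite matrix. Then S defines a p-summing operator from ℓ_{p*} to ℓ_p if and only if c_p := (Σ_j Σ_k |s_{jk}|^p)^{1/p} < ∞, and in that case the p-summing norm π_p(S) equals c_p. -/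
open scoped ENNReal

/-- `T` is `p`-summing with constant `C`: for every finite family `x₁,…,x_m` in `X`,
`(Σ ‖T xⱼ‖^p)^{1/p} ≤ C · sup_{‖x*‖ ≤ 1} (Σ |⟨x*, xⱼ⟩|^p)^{1/p}`. -/
def IsPSummingWith {X Y : Type*} [NormedAddCommGroup X] [NormedSpace ℂ X]
    [NormedAddCommGroup Y] [NormedSpace ℂ Y] (p : ℝ) (T : X →L[ℂ] Y) (C : ℝ) : Prop :=
  ∀ (m : ℕ) (x : Fin m → X),
    (∑ j, ‖T (x j)‖ ^ p) ^ (1 / p) ≤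
      C * ⨆ φ : {φ : X →L[ℂ] ℂ // ‖φ‖ ≤ 1}, (∑ j, ‖(φ : X →L[ℂ] ℂ) (x j)‖ ^ p) ^ (1 / p)

/-- The `p`-summing norm `π_p(T)`. -/
noncomputable def pSummingNorm {X Y : Type*} [NormedAddCommGroup X] [NormedSpace ℂ X]
    [NormedAddCommGroup Y] [NormedSpace ℂ Y] (p : ℝ) (T : X →L[ℂ] Y) : ℝ :=
  sInf {C : ℝ | 0 ≤ C ∧ IsPSummingWith p T C}

namespace Stmt11Aux

set_option maxHeartbeats 1000000

variable {p : ℝ} {q : ℝ≥0∞} [Fact (1 ≤ q)]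

lemma conj_facts (hp : 1 < p) (hq : 1 / ENNReal.ofReal p + 1 / q = 1) :
    q ≠ 0 ∧ q ≠ ∞ ∧ p.HolderConjugate q.toReal := by
  have hp0 : (0:ℝ) < p := lt_trans one_pos hp
  have hP0 : ENNReal.ofReal p ≠ 0 := by
    simp [ENNReal.ofReal_eq_zero, not_le, hp0]
  have hq0 : q ≠ 0 := by
    rintro rfl
    simp at hq
  have hqt : q ≠ ∞ := by
    rintro rfl
    simp only [one_div, ENNReal.inv_top, add_zero] at hq
    have h1 : ENNReal.ofReal p = 1 := by
      simpa using congrArg (·⁻¹) hq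
    have : p ≤ 1 := by
      have := congrArg ENNReal.toReal h1
      simp [ENNReal.toReal_ofReal hp0.le] at this
      linarith [this.le]
    linarith
  refine ⟨hq0, hqt, Real.holderConjugate_iff.mpr ⟨hp, ?_⟩⟩
  have h1 : (1 / ENNReal.ofReal p) ≠ ∞ := by
    simp [one_div, ENNReal.inv_ne_top, hP0]
  have h2 : (1 / q) ≠ ∞ := by
    simp [one_div, ENNReal.inv_ne_top, hq0]
  have := congrArg ENNReal.toReal hq
  rw [ENNReal.toReal_add h1 h2] at this
  simpa only [one_div, ENNReal.toReal_inv, ENNReal.toReal_ofReal hp0.le,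
    ENNReal.toReal_one] using this

section Row

variable {P : ℝ≥0∞}

lemma rowSummable (hpq : P.toReal.HolderConjugate q.toReal)
    (A : lp (fun _ : ℕ => ℂ) P) (x : lp (fun _ : ℕ => ℂ) q) :
    Summable fun k => A k * x k := by
  have := lp.summable_mul hpq A x
  exact Summable.of_norm (by simpa [norm_mul] using this)

lemma rowBound (hpq : P.toReal.HolderConjugate q.toReal)
    (A : lp (fun _ : ℕ => ℂ) P) (x : lp (fun _ : ℕ => ℂ) q) :
    ‖∑' k, A k * x k‖ ≤ ‖A‖ * ‖x‖ := by
  refine le_trans (norm_tsum_le_tsum_norm ?_) ?_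
  · simpa [norm_mul] using lp.summable_mul hpq A x
  · simpa [norm_mul] using lp.tsum_mul_le_mul_norm' hpq A x

/-- The continuous linear functional on `ℓ_q` given by pairing with a fixed element of `ℓ_p`. -/
noncomputable def rowCLM (hpq : P.toReal.HolderConjugate q.toReal)
    (A : lp (fun _ : ℕ => ℂ) P) : lp (fun _ : ℕ => ℂ) q →L[ℂ] ℂ :=
  LinearMap.mkContinuous
    { toFun := fun x => ∑' k, A k * x k
      map_add' := fun x y => by
        simp only [lp.coeFn_add, Pi.add_apply, mul_add]
        exact Summable.tsum_add (rowSummable hpq A x) (rowSummable hpq A y)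
      map_smul' := fun c x => by
        simp only [lp.coeFn_smul, Pi.smul_apply, smul_eq_mul, RingHom.id_apply]
        rw [← tsum_mul_left]
        congr 1; funext k; ring }
    ‖A‖ (fun x => rowBound hpq A x)

lemma rowCLM_apply (hpq : P.toReal.HolderConjugate q.toReal)
    (A : lp (fun _ : ℕ => ℂ) P) (x : lp (fun _ : ℕ => ℂ) q) :
    rowCLM hpq A x = ∑' k, A k * x k := rfl

lemma rowCLM_norm_le (hpq : P.toReal.HolderConjugate q.toReal)
    (A : lp (fun _ : ℕ => ℂ) P) : ‖rowCLM hpq A‖ ≤ ‖A‖ :=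
  LinearMap.mkContinuous_norm_le _ (lp.norm_nonneg' A) _

end Row

/-- Duality : the unit ball of `(ℓ_q)^*` tested against the standard basis vectors. -/
lemma unit_ball_sum_le (hp : 1 < p) (hc : p.HolderConjugate q.toReal)
    (φ : lp (fun _ : ℕ => ℂ) q →L[ℂ] ℂ) (hφ : ‖φ‖ ≤ 1) (v : Finset ℕ) :
    ∑ k ∈ v, ‖φ (lp.single q k (1:ℂ))‖ ^ p ≤ 1 := by
  have hqt : 0 < q.toReal := hc.symm.pos
  have hqt1 : 1 < q.toReal := hc.symm.lt
  have hp0 : (0:ℝ) < p := hc.pos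
  set a : ℕ → ℂ := fun k => φ (lp.single q k (1:ℂ)) with ha
  set b : ℕ → ℂ := fun k => (starRingEnd ℂ) (a k) * ((‖a k‖ ^ (p-2) : ℝ) : ℂ) with hb
  set x : lp (fun _ : ℕ => ℂ) q := ∑ k ∈ v, lp.single q k (b k) with hx
  set S : ℝ := ∑ k ∈ v, ‖a k‖ ^ p with hS
  have hS0 : 0 ≤ S := Finset.sum_nonneg fun k _ => Real.rpow_nonneg (norm_nonneg _) _
  have key : ∀ k, b k * a k = ((‖a k‖ ^ p : ℝ) : ℂ) := by
    intro k
    rcases eq_or_ne (a k) 0 with h | h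
    · simp [hb, h, Real.zero_rpow hp0.ne']
    · have hpos : 0 < ‖a k‖ := norm_pos_iff.2 h
      have h2 : (‖a k‖:ℝ) ^ (2:ℕ) * ‖a k‖ ^ (p-2) = ‖a k‖ ^ p := by
        rw [← Real.rpow_natCast (‖a k‖) 2, ← Real.rpow_add hpos]; norm_num
      have hconj : (starRingEnd ℂ) (a k) * a k = ((‖a k‖ ^ (2:ℕ) : ℝ) : ℂ) := by
        rw [mul_comm, Complex.mul_conj, Complex.normSq_eq_norm_sq]
      calc b k * a k = ((starRingEnd ℂ) (a k) * a k) * ((‖a k‖ ^ (p-2) : ℝ) : ℂ) := by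
            rw [hb]; ring
        _ = ((‖a k‖ ^ (2:ℕ) : ℝ) : ℂ) * ((‖a k‖ ^ (p-2) : ℝ) : ℂ) := by rw [hconj]
        _ = ((‖a k‖ ^ p : ℝ) : ℂ) := by rw [← Complex.ofReal_mul, h2]
  have hφx : φ x = ((S : ℝ) : ℂ) := by
    rw [hx, map_sum, hS]
    push_cast
    refine Finset.sum_congr rfl fun k _ => ?_
    have hsingle : lp.single q k (b k) = b k • (lp.single q k (1:ℂ) : lp (fun _ : ℕ => ℂ) q) := by
      rw [← lp.single_smul]
      norm_num
    rw [hsingle, map_smul]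
    simpa [smul_eq_mul, mul_comm] using key k
  have hnormb : ∀ k, ‖b k‖ ^ q.toReal = ‖a k‖ ^ p := by
    intro k
    rcases eq_or_ne (a k) 0 with h | h
    · have hb0 : b k = 0 := by simp [hb, h]
      rw [hb0, h]
      simp [Real.zero_rpow hqt.ne', Real.zero_rpow hp0.ne']
    · have hpos : 0 < ‖a k‖ := norm_pos_iff.2 h
      have hbk : ‖b k‖ = ‖a k‖ ^ (p-1) := by
        rw [hb]
        simp only [norm_mul, RCLike.norm_conj, Complex.norm_real, Real.norm_eq_abs,
          abs_of_nonneg (Real.rpow_nonneg (norm_nonneg _) _)]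
        rw [← Real.rpow_one_add' hpos.le (by intro hz; linarith : (1:ℝ) + (p-2) ≠ 0)]
        congr 1
        ring
      rw [hbk, ← Real.rpow_mul (norm_nonneg _), hc.sub_one_mul_conj]
  have hxnorm : ‖x‖ ^ q.toReal = S := by
    rw [hx, lp.norm_sum_single hqt b v, hS]
    exact Finset.sum_congr rfl fun k _ => hnormb k
  have hSle : S ≤ S ^ (1 / q.toReal) := by
    have h1 : S = ‖φ x‖ := by rw [hφx]; simp [abs_of_nonneg hS0]
    have h2 : ‖φ x‖ ≤ ‖φ‖ * ‖x‖ := φ.le_opNorm x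
    have h3 : ‖x‖ = S ^ (1 / q.toReal) := by
      rw [← hxnorm, one_div, Real.rpow_rpow_inv (lp.norm_nonneg' x) hqt.ne']
    calc S = ‖φ x‖ := h1
      _ ≤ ‖φ‖ * ‖x‖ := h2
      _ ≤ 1 * ‖x‖ := mul_le_mul_of_nonneg_right hφ (lp.norm_nonneg' x)
      _ = S ^ (1 / q.toReal) := by rw [one_mul, h3]
  by_contra hcon
  push_neg at hcon
  have : S ^ (1 / q.toReal) < S := by
    calc S ^ (1 / q.toReal) < S ^ (1:ℝ) :=
        Real.rpow_lt_rpow_of_exponent_lt hcon (by rw [one_div]; exact inv_lt_one_of_one_lt₀ hqt1)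
      _ = S := Real.rpow_one S
  linarith

section Main
variable [Fact (1 ≤ ENNReal.ofReal p)]

lemma bdd_sup (hp0 : 0 < p) (m : ℕ) (x : Fin m → lp (fun _ : ℕ => ℂ) q) :
    BddAbove (Set.range fun φ : {φ : lp (fun _ : ℕ => ℂ) q →L[ℂ] ℂ // ‖φ‖ ≤ 1} =>
      (∑ i, ‖φ.1 (x i)‖ ^ p) ^ (1 / p)) := by
  refine ⟨(∑ i, ‖x i‖ ^ p) ^ (1 / p), ?_⟩
  rintro - ⟨φ, rfl⟩
  refine Real.rpow_le_rpow (Finset.sum_nonneg fun i _ => Real.rpow_nonneg (norm_nonneg _) _)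
    (Finset.sum_le_sum fun i _ => ?_) (by positivity)
  refine Real.rpow_le_rpow (norm_nonneg _) ?_ hp0.le
  calc ‖φ.1 (x i)‖ ≤ ‖φ.1‖ * ‖x i‖ := φ.1.le_opNorm _
    _ ≤ 1 * ‖x i‖ := mul_le_mul_of_nonneg_right φ.2 (norm_nonneg _)
    _ = ‖x i‖ := one_mul _

lemma sup_nonneg' (hp0 : 0 < p) (m : ℕ) (x : Fin m → lp (fun _ : ℕ => ℂ) q) :
    0 ≤ ⨆ φ : {φ : lp (fun _ : ℕ => ℂ) q →L[ℂ] ℂ // ‖φ‖ ≤ 1},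
      (∑ i, ‖φ.1 (x i)‖ ^ p) ^ (1 / p) := by
  have h0 : ((∑ i, ‖((0 : lp (fun _ : ℕ => ℂ) q →L[ℂ] ℂ)) (x i)‖ ^ p) ^ (1 / p) : ℝ) = 0 := by
    simp [Real.zero_rpow hp0.ne', Real.zero_rpow (inv_ne_zero hp0.ne'), one_div]
  calc (0:ℝ) = _ := h0.symm
    _ ≤ _ := le_ciSup (bdd_sup hp0 m x) ⟨0, by simp⟩

/-- Upper bound with an abstract majorant `M` of the unit-ball sums. -/
lemma psumming_upper_aux (hp : 1 < p) (hc : p.HolderConjugate q.toReal)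
    (s : ℕ → ℕ → ℂ) (hs : Summable (fun jk : ℕ × ℕ => ‖s jk.1 jk.2‖ ^ p))
    (T : lp (fun _ : ℕ => ℂ) q →L[ℂ] lp (fun _ : ℕ => ℂ) (ENNReal.ofReal p))
    (hT : ∀ (x : lp (fun _ : ℕ => ℂ) q) (j : ℕ),
      (T x : ∀ _ : ℕ, ℂ) j = ∑' k : ℕ, s j k * (x : ∀ _ : ℕ, ℂ) k)
    (m : ℕ) (x : Fin m → lp (fun _ : ℕ => ℂ) q) (M : ℝ) (hM0 : 0 ≤ M)
    (hMle : ∀ ψ : lp (fun _ : ℕ => ℂ) q →L[ℂ] ℂ, ‖ψ‖ ≤ 1 →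
      (∑ i, ‖ψ (x i)‖ ^ p) ^ (1 / p) ≤ M) :
    (∑ i, ‖T (x i)‖ ^ p) ^ (1 / p) ≤
      ((∑' jk : ℕ × ℕ, ‖s jk.1 jk.2‖ ^ p) ^ (1 / p)) * M := by
  have hp0 : (0:ℝ) < p := hc.pos
  have hP : (ENNReal.ofReal p).toReal = p := ENNReal.toReal_ofReal hp0.le
  have hPpos : 0 < (ENNReal.ofReal p).toReal := by rw [hP]; exact hp0
  have hc' : (ENNReal.ofReal p).toReal.HolderConjugate q.toReal := by rw [hP]; exact hc
  have hnn : ∀ jk : ℕ × ℕ, 0 ≤ ‖s jk.1 jk.2‖ ^ p :=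
    fun jk => Real.rpow_nonneg (norm_nonneg _) _
  have hrow : ∀ j, Summable fun k => ‖s j k‖ ^ p := fun j => hs.prod_factor j
  set A : ℕ → lp (fun _ : ℕ => ℂ) (ENNReal.ofReal p) :=
    fun j => ⟨s j, memℓp_gen (by rw [hP]; exact hrow j)⟩ with hA
  have hTA : ∀ (x : lp (fun _ : ℕ => ℂ) q) (j : ℕ), (T x : ∀ _ : ℕ, ℂ) j = rowCLM hc' (A j) x :=
    fun x j => by rw [hT x j, rowCLM_apply]
  have normA : ∀ j, ‖A j‖ ^ p = ∑' k, ‖s j k‖ ^ p := fun j => by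
    have := lp.norm_rpow_eq_tsum hPpos (A j)
    rw [hP] at this
    exact this
  have hsumA : Summable fun j => ‖A j‖ ^ p := by
    refine Summable.congr ((summable_prod_of_nonneg hnn).1 hs).2 fun j => ?_
    simpa using (normA j).symm
  have htsumA : ∑' j, ‖A j‖ ^ p = ∑' jk : ℕ × ℕ, ‖s jk.1 jk.2‖ ^ p := by
    rw [Summable.tsum_prod' hs fun j => hs.prod_factor j]
    refine tsum_congr fun j => ?_
    simpa using normA j
  set c : ℝ := (∑' jk : ℕ × ℕ, ‖s jk.1 jk.2‖ ^ p) ^ (1 / p) with hcdef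
  have hc0 : 0 ≤ c := Real.rpow_nonneg (tsum_nonneg hnn) _
  have hcp : c ^ p = ∑' jk : ℕ × ℕ, ‖s jk.1 jk.2‖ ^ p := by
    rw [hcdef, one_div, Real.rpow_inv_rpow (tsum_nonneg hnn) hp0.ne']
  have hj : ∀ j, ∑ i, ‖rowCLM hc' (A j) (x i)‖ ^ p ≤ ‖A j‖ ^ p * M ^ p := by
    intro j
    rcases eq_or_ne ‖A j‖ 0 with h0 | h0
    · have hAz : A j = 0 := lp.norm_eq_zero_iff.1 h0
      have hz : ∀ i, ‖rowCLM hc' (A j) (x i)‖ ^ p = 0 := by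
        intro i
        rw [hAz]
        have hz0 : rowCLM hc' (0 : lp (fun _ : ℕ => ℂ) (ENNReal.ofReal p)) (x i) = 0 := by
          rw [rowCLM_apply]
          simp
        rw [hz0]
        simp [Real.zero_rpow hp0.ne']
      rw [Finset.sum_congr rfl fun i _ => hz i]
      simp only [Finset.sum_const_zero]
      positivity
    · have hpos : 0 < ‖A j‖ := lt_of_le_of_ne (lp.norm_nonneg' _) (Ne.symm h0)
      have hψ1 : ‖(‖A j‖⁻¹ : ℝ) • rowCLM hc' (A j)‖ ≤ 1 := by
        refine le_trans (ContinuousLinearMap.opNorm_smul_le _ _) ?_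
        rw [norm_inv, Real.norm_eq_abs, abs_of_pos hpos, inv_mul_le_iff₀ hpos, mul_one]
        exact rowCLM_norm_le hc' (A j)
      have happ : ∀ i, ‖rowCLM hc' (A j) (x i)‖
          = ‖A j‖ * ‖((‖A j‖⁻¹ : ℝ) • rowCLM hc' (A j)) (x i)‖ := by
        intro i
        have hn : ((‖A j‖⁻¹ : ℝ) • rowCLM hc' (A j)) (x i)
            = (‖A j‖⁻¹ : ℝ) • (rowCLM hc' (A j) (x i)) := rfl
        rw [hn, norm_smul, norm_inv, Real.norm_eq_abs, abs_of_pos hpos]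
        field_simp
      have hψM : ∑ i, ‖((‖A j‖⁻¹ : ℝ) • rowCLM hc' (A j)) (x i)‖ ^ p ≤ M ^ p := by
        have h1 := hMle _ hψ1
        have h2 := Real.rpow_le_rpow (Real.rpow_nonneg
          (Finset.sum_nonneg fun i _ => Real.rpow_nonneg (norm_nonneg _) _) _) h1 hp0.le
        rwa [one_div, Real.rpow_inv_rpow
          (Finset.sum_nonneg fun i _ => Real.rpow_nonneg (norm_nonneg _) _) hp0.ne'] at h2
      calc ∑ i, ‖rowCLM hc' (A j) (x i)‖ ^ p
          = ∑ i, ‖A j‖ ^ p * ‖((‖A j‖⁻¹ : ℝ) • rowCLM hc' (A j)) (x i)‖ ^ p := by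
            refine Finset.sum_congr rfl fun i _ => ?_
            rw [happ i, Real.mul_rpow hpos.le (norm_nonneg _)]
        _ = ‖A j‖ ^ p * ∑ i, ‖((‖A j‖⁻¹ : ℝ) • rowCLM hc' (A j)) (x i)‖ ^ p := by
            rw [Finset.mul_sum]
        _ ≤ ‖A j‖ ^ p * M ^ p := by
            exact mul_le_mul_of_nonneg_left hψM (Real.rpow_nonneg hpos.le _)
  have hsum_i : ∀ i, Summable fun j => ‖(T (x i) : ∀ _ : ℕ, ℂ) j‖ ^ p := by
    intro i
    have := (lp.memℓp (T (x i))).summable hPpos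
    rwa [hP] at this
  have hswap : ∑ i, ‖T (x i)‖ ^ p = ∑' j, ∑ i, ‖rowCLM hc' (A j) (x i)‖ ^ p := by
    have h1 : ∀ i, ‖T (x i)‖ ^ p = ∑' j, ‖rowCLM hc' (A j) (x i)‖ ^ p := by
      intro i
      have h2 := lp.norm_rpow_eq_tsum hPpos (T (x i))
      rw [hP] at h2
      rw [h2]
      exact tsum_congr fun j => by rw [hTA (x i) j]
    rw [Finset.sum_congr rfl fun i _ => h1 i]
    rw [Summable.tsum_finsetSum fun i _ => (hsum_i i).congr fun j => by rw [hTA (x i) j]]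
  have hfinal : ∑ i, ‖T (x i)‖ ^ p ≤ c ^ p * M ^ p := by
    rw [hswap]
    have hle : ∑' j, ∑ i, ‖rowCLM hc' (A j) (x i)‖ ^ p ≤ ∑' j, ‖A j‖ ^ p * M ^ p := by
      refine Summable.tsum_le_tsum hj ?_ ?_
      · exact summable_sum fun i _ => (hsum_i i).congr fun j => by rw [hTA (x i) j]
      · exact hsumA.mul_right _
    refine hle.trans ?_
    rw [tsum_mul_right, htsumA, hcp]
  have hnnsum : 0 ≤ ∑ i, ‖T (x i)‖ ^ p :=
    Finset.sum_nonneg fun i _ => Real.rpow_nonneg (norm_nonneg _) _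
  calc (∑ i, ‖T (x i)‖ ^ p) ^ (1 / p) ≤ (c ^ p * M ^ p) ^ (1 / p) :=
        Real.rpow_le_rpow hnnsum hfinal (by positivity)
    _ = c * M := by
        rw [← Real.mul_rpow hc0 hM0, one_div, Real.rpow_rpow_inv (mul_nonneg hc0 hM0) hp0.ne']

/-- Any `T` with matrix `s` (with `s` `p`-summable) is `p`-summing with constant
`(∑ |s_{jk}|^p)^{1/p}`. -/
lemma psumming_of_matrix (hp : 1 < p) (hc : p.HolderConjugate q.toReal)
    (s : ℕ → ℕ → ℂ) (hs : Summable (fun jk : ℕ × ℕ => ‖s jk.1 jk.2‖ ^ p))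
    (T : lp (fun _ : ℕ => ℂ) q →L[ℂ] lp (fun _ : ℕ => ℂ) (ENNReal.ofReal p))
    (hT : ∀ (x : lp (fun _ : ℕ => ℂ) q) (j : ℕ),
      (T x : ∀ _ : ℕ, ℂ) j = ∑' k : ℕ, s j k * (x : ∀ _ : ℕ, ℂ) k) :
    IsPSummingWith p T ((∑' jk : ℕ × ℕ, ‖s jk.1 jk.2‖ ^ p) ^ (1 / p)) := by
  intro m x
  have hp0 : (0:ℝ) < p := lt_trans one_pos hp
  exact psumming_upper_aux hp hc s hs T hT m x _ (sup_nonneg' hp0 m x)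
    (fun ψ hψ1 => le_ciSup (bdd_sup hp0 m x) ⟨ψ, hψ1⟩)

/-- Construction of the operator from a summable matrix. -/
noncomputable def matrixCLM (hp : 1 < p) (hc : p.HolderConjugate q.toReal)
    (s : ℕ → ℕ → ℂ) (hs : Summable (fun jk : ℕ × ℕ => ‖s jk.1 jk.2‖ ^ p)) :
    lp (fun _ : ℕ => ℂ) q →L[ℂ] lp (fun _ : ℕ => ℂ) (ENNReal.ofReal p) := by
  have hp0 : (0:ℝ) < p := lt_trans one_pos hp
  have hP : (ENNReal.ofReal p).toReal = p := ENNReal.toReal_ofReal hp0.le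
  have hPpos : 0 < (ENNReal.ofReal p).toReal := by rw [hP]; exact hp0
  have hc' : (ENNReal.ofReal p).toReal.HolderConjugate q.toReal := by rw [hP]; exact hc
  have hnn : ∀ jk : ℕ × ℕ, 0 ≤ ‖s jk.1 jk.2‖ ^ p :=
    fun jk => Real.rpow_nonneg (norm_nonneg _) _
  have hrow : ∀ j, Summable fun k => ‖s j k‖ ^ p := fun j => hs.prod_factor j
  let A : ℕ → lp (fun _ : ℕ => ℂ) (ENNReal.ofReal p) :=
    fun j => ⟨s j, memℓp_gen (by rw [hP]; exact hrow j)⟩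
  have normA : ∀ j, ‖A j‖ ^ p = ∑' k, ‖s j k‖ ^ p := fun j => by
    have := lp.norm_rpow_eq_tsum hPpos (A j)
    rw [hP] at this
    exact this
  have hsumA : Summable fun j => ‖A j‖ ^ p := by
    refine Summable.congr ((summable_prod_of_nonneg hnn).1 hs).2 fun j => ?_
    simpa using (normA j).symm
  have hbound : ∀ (x : lp (fun _ : ℕ => ℂ) q) j,
      ‖rowCLM hc' (A j) x‖ ^ p ≤ ‖A j‖ ^ p * ‖x‖ ^ p := by
    intro x j
    have h1 : ‖rowCLM hc' (A j) x‖ ≤ ‖A j‖ * ‖x‖ :=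
      le_trans ((rowCLM hc' (A j)).le_opNorm x)
        (mul_le_mul_of_nonneg_right (rowCLM_norm_le hc' (A j)) (lp.norm_nonneg' x))
    calc ‖rowCLM hc' (A j) x‖ ^ p ≤ (‖A j‖ * ‖x‖) ^ p :=
          Real.rpow_le_rpow (norm_nonneg _) h1 hp0.le
      _ = ‖A j‖ ^ p * ‖x‖ ^ p :=
          Real.mul_rpow (lp.norm_nonneg' _) (lp.norm_nonneg' _)
  have hmem : ∀ x : lp (fun _ : ℕ => ℂ) q,
      Memℓp (fun j => rowCLM hc' (A j) x) (ENNReal.ofReal p) := by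
    intro x
    refine memℓp_gen ?_
    rw [hP]
    refine Summable.of_nonneg_of_le (fun j => Real.rpow_nonneg (norm_nonneg _) _)
      (fun j => hbound x j) (hsumA.mul_right _)
  refine LinearMap.mkContinuous
    { toFun := fun x => (⟨fun j => rowCLM hc' (A j) x, hmem x⟩ :
        lp (fun _ : ℕ => ℂ) (ENNReal.ofReal p))
      map_add' := fun x y => ?_
      map_smul' := fun c x => ?_ }
    ((∑' jk : ℕ × ℕ, ‖s jk.1 jk.2‖ ^ p) ^ (1 / p)) ?_
  · apply lp.ext
    funext j
    have : ((⟨fun j => rowCLM hc' (A j) (x + y), hmem (x+y)⟩ :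
        lp (fun _ : ℕ => ℂ) (ENNReal.ofReal p)) : ∀ _ : ℕ, ℂ) j = rowCLM hc' (A j) (x + y) := rfl
    rw [lp.coeFn_add]
    exact map_add (rowCLM hc' (A j)) x y
  · apply lp.ext
    funext j
    rw [lp.coeFn_smul]
    exact map_smul (rowCLM hc' (A j)) c x
  · intro x
    simp only [LinearMap.coe_mk, AddHom.coe_mk]
    set c0 : ℝ := (∑' jk : ℕ × ℕ, ‖s jk.1 jk.2‖ ^ p) ^ (1 / p) with hc0def
    have hc00 : 0 ≤ c0 := Real.rpow_nonneg (tsum_nonneg hnn) _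
    have hc0p : c0 ^ p = ∑' jk : ℕ × ℕ, ‖s jk.1 jk.2‖ ^ p := by
      rw [hc0def, one_div, Real.rpow_inv_rpow (tsum_nonneg hnn) hp0.ne']
    refine lp.norm_le_of_tsum_le hPpos (mul_nonneg hc00 (lp.norm_nonneg' x)) ?_
    rw [hP]
    have hsumm : Summable fun j => ‖rowCLM hc' (A j) x‖ ^ p :=
      Summable.of_nonneg_of_le (fun j => Real.rpow_nonneg (norm_nonneg _) _)
        (fun j => hbound x j) (hsumA.mul_right _)
    have h1 : ∑' j, ‖rowCLM hc' (A j) x‖ ^ p ≤ ∑' j, ‖A j‖ ^ p * ‖x‖ ^ p :=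
      Summable.tsum_le_tsum (fun j => hbound x j) hsumm (hsumA.mul_right _)
    have htsumA : ∑' j, ‖A j‖ ^ p = ∑' jk : ℕ × ℕ, ‖s jk.1 jk.2‖ ^ p := by
      rw [Summable.tsum_prod' hs fun j => hs.prod_factor j]
      refine tsum_congr fun j => ?_
      simpa using normA j
    have h2 : ∑' j, ‖A j‖ ^ p * ‖x‖ ^ p = (c0 * ‖x‖) ^ p := by
      rw [tsum_mul_right, htsumA, ← hc0p, ← Real.mul_rpow hc00 (lp.norm_nonneg' x)]
    calc ∑' j, ‖((⟨fun j => rowCLM hc' (A j) x, hmem x⟩ :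
            lp (fun _ : ℕ => ℂ) (ENNReal.ofReal p)) : ∀ _ : ℕ, ℂ) j‖ ^ p
        = ∑' j, ‖rowCLM hc' (A j) x‖ ^ p := by rfl
      _ ≤ ∑' j, ‖A j‖ ^ p * ‖x‖ ^ p := h1
      _ = (c0 * ‖x‖) ^ p := h2

lemma matrixCLM_apply (hp : 1 < p) (hc : p.HolderConjugate q.toReal)
    (s : ℕ → ℕ → ℂ) (hs : Summable (fun jk : ℕ × ℕ => ‖s jk.1 jk.2‖ ^ p))
    (x : lp (fun _ : ℕ => ℂ) q) (j : ℕ) :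
    ((matrixCLM hp hc s hs x : lp (fun _ : ℕ => ℂ) (ENNReal.ofReal p)) : ∀ _ : ℕ, ℂ) j
      = ∑' k : ℕ, s j k * (x : ∀ _ : ℕ, ℂ) k := rfl

/-- Lower bound : testing against standard basis vectors. -/
lemma finset_sum_le (hp : 1 < p) (hc : p.HolderConjugate q.toReal)
    (s : ℕ → ℕ → ℂ)
    (T : lp (fun _ : ℕ => ℂ) q →L[ℂ] lp (fun _ : ℕ => ℂ) (ENNReal.ofReal p))
    (hT : ∀ (x : lp (fun _ : ℕ => ℂ) q) (j : ℕ),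
      (T x : ∀ _ : ℕ, ℂ) j = ∑' k : ℕ, s j k * (x : ∀ _ : ℕ, ℂ) k)
    {C : ℝ} (hC0 : 0 ≤ C) (hps : IsPSummingWith p T C)
    (u : Finset (ℕ × ℕ)) : ∑ jk ∈ u, ‖s jk.1 jk.2‖ ^ p ≤ C ^ p := by
  have hp0 : (0:ℝ) < p := lt_trans one_pos hp
  have hP : (ENNReal.ofReal p).toReal = p := ENNReal.toReal_ofReal hp0.le
  have hPpos : 0 < (ENNReal.ofReal p).toReal := by rw [hP]; exact hp0
  have hTek : ∀ j k, (T (lp.single q k (1:ℂ)) : ∀ _ : ℕ, ℂ) j = s j k := by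
    intro j k
    rw [hT (lp.single q k (1:ℂ)) j]
    have h1 : ∀ k' : ℕ, k' ≠ k → s j k' * (lp.single q k (1:ℂ) : ∀ _ : ℕ, ℂ) k' = 0 := by
      intro k' hk'
      have h0 : (lp.single q k (1:ℂ) : ∀ _ : ℕ, ℂ) k' = 0 := lp.single_apply_ne (E := fun _ : ℕ => ℂ) q k (1:ℂ) hk'
      rw [h0]
      ring
    have h0 : (lp.single q k (1:ℂ) : ∀ _ : ℕ, ℂ) k = 1 := lp.single_apply_self (E := fun _ : ℕ => ℂ) q k (1:ℂ)
    rw [tsum_eq_single k h1, h0]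
    ring
  have hcol : ∀ k, Summable fun j => ‖s j k‖ ^ p := by
    intro k
    have := (lp.memℓp (T (lp.single q k (1:ℂ)))).summable hPpos
    rw [hP] at this
    exact this.congr fun j => by rw [hTek j k]
  have hnormTek : ∀ k, ‖T (lp.single q k (1:ℂ))‖ ^ p = ∑' j, ‖s j k‖ ^ p := by
    intro k
    have h2 := lp.norm_rpow_eq_tsum hPpos (T (lp.single q k (1:ℂ)))
    rw [hP] at h2
    rw [h2]
    exact tsum_congr fun j => by rw [hTek j k]
  have hmain : ∀ N : ℕ, ∑ k ∈ Finset.range N, ∑' j, ‖s j k‖ ^ p ≤ C ^ p := by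
    intro N
    have hsup : (⨆ φ : {φ : lp (fun _ : ℕ => ℂ) q →L[ℂ] ℂ // ‖φ‖ ≤ 1},
        (∑ i : Fin N, ‖φ.1 ((lp.single q (i:ℕ) (1:ℂ) : lp (fun _ : ℕ => ℂ) q))‖ ^ p) ^ (1 / p)) ≤ 1 := by
      have : Nonempty {φ : lp (fun _ : ℕ => ℂ) q →L[ℂ] ℂ // ‖φ‖ ≤ 1} := ⟨⟨0, by simp⟩⟩
      refine ciSup_le fun φ => ?_
      refine Real.rpow_le_one
        (Finset.sum_nonneg fun i _ => Real.rpow_nonneg (norm_nonneg _) _) ?_ (by positivity)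
      rw [Fin.sum_univ_eq_sum_range (fun k => ‖φ.1 ((lp.single q k (1:ℂ) : lp (fun _ : ℕ => ℂ) q))‖ ^ p) N]
      exact unit_ball_sum_le hp hc φ.1 φ.2 (Finset.range N)
    have h1 := hps N (fun i : Fin N => lp.single q (i:ℕ) (1:ℂ))
    have h2 : (∑ i : Fin N, ‖T (lp.single q (i:ℕ) (1:ℂ))‖ ^ p) ^ (1 / p) ≤ C := by
      refine h1.trans ?_
      calc C * _ ≤ C * 1 := mul_le_mul_of_nonneg_left hsup hC0
        _ = C := mul_one C
    have h3 : ∑ i : Fin N, ‖T (lp.single q (i:ℕ) (1:ℂ))‖ ^ p ≤ C ^ p := by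
      have h4 := Real.rpow_le_rpow (Real.rpow_nonneg
        (Finset.sum_nonneg fun i _ => Real.rpow_nonneg (norm_nonneg _) _) _) h2 hp0.le
      rwa [one_div, Real.rpow_inv_rpow
        (Finset.sum_nonneg fun i _ => Real.rpow_nonneg (norm_nonneg _) _) hp0.ne'] at h4
    calc ∑ k ∈ Finset.range N, ∑' j, ‖s j k‖ ^ p
        = ∑ i : Fin N, ‖T (lp.single q (i:ℕ) (1:ℂ))‖ ^ p := by
          rw [Fin.sum_univ_eq_sum_range (fun k => ‖T (lp.single q k (1:ℂ))‖ ^ p) N]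
          exact Finset.sum_congr rfl fun k _ => (hnormTek k).symm
      _ ≤ C ^ p := h3
  set N : ℕ := 1 + u.sup (fun jk => max jk.1 jk.2) with hN
  have hsub : u ⊆ Finset.range N ×ˢ Finset.range N := by
    intro jk hjk
    rw [Finset.mem_product, Finset.mem_range, Finset.mem_range]
    constructor
    · calc jk.1 ≤ max jk.1 jk.2 := le_max_left _ _
        _ ≤ u.sup (fun jk => max jk.1 jk.2) := Finset.le_sup (f := fun jk => max jk.1 jk.2) hjk
        _ < N := by omega
    · calc jk.2 ≤ max jk.1 jk.2 := le_max_right _ _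
        _ ≤ u.sup (fun jk => max jk.1 jk.2) := Finset.le_sup (f := fun jk => max jk.1 jk.2) hjk
        _ < N := by omega
  calc ∑ jk ∈ u, ‖s jk.1 jk.2‖ ^ p
      ≤ ∑ jk ∈ Finset.range N ×ˢ Finset.range N, ‖s jk.1 jk.2‖ ^ p :=
        Finset.sum_le_sum_of_subset_of_nonneg hsub
          (fun jk _ _ => Real.rpow_nonneg (norm_nonneg _) _)
    _ = ∑ j ∈ Finset.range N, ∑ k ∈ Finset.range N, ‖s j k‖ ^ p := by
        rw [Finset.sum_product]
    _ = ∑ k ∈ Finset.range N, ∑ j ∈ Finset.range N, ‖s j k‖ ^ p := Finset.sum_comm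
    _ ≤ ∑ k ∈ Finset.range N, ∑' j, ‖s j k‖ ^ p := by
        refine Finset.sum_le_sum fun k _ => ?_
        exact Summable.sum_le_tsum _ (fun j _ => Real.rpow_nonneg (norm_nonneg _) _) (hcol k)
    _ ≤ C ^ p := hmain N

lemma summable_of_psumming (hp : 1 < p) (hc : p.HolderConjugate q.toReal)
    (s : ℕ → ℕ → ℂ)
    (T : lp (fun _ : ℕ => ℂ) q →L[ℂ] lp (fun _ : ℕ => ℂ) (ENNReal.ofReal p))
    (hT : ∀ (x : lp (fun _ : ℕ => ℂ) q) (j : ℕ),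
      (T x : ∀ _ : ℕ, ℂ) j = ∑' k : ℕ, s j k * (x : ∀ _ : ℕ, ℂ) k)
    {C : ℝ} (hC0 : 0 ≤ C) (hps : IsPSummingWith p T C) :
    Summable (fun jk : ℕ × ℕ => ‖s jk.1 jk.2‖ ^ p) :=
  summable_of_sum_le (fun jk => Real.rpow_nonneg (norm_nonneg _) _)
    (fun u => finset_sum_le hp hc s T hT hC0 hps u)

end Main

end Stmt11Aux

/-- Let `1 < p < ∞` with conjugate exponent `p*` (here `q = p*` as an extended real, with
`1/p + 1/q = 1`), and let `s = {s_{jk}}` be an infinite matrix.  Then `s` defines a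
`p`-summing operator from `ℓ_{p*}` to `ℓ_p` if and only if
`c_p = (Σ_{j,k} |s_{jk}|^p)^{1/p} < ∞`, and in that case `π_p(S) = c_p`. -/
theorem stmt_11 (p : ℝ) (hp : 1 < p) (q : ℝ≥0∞) [Fact (1 ≤ q)]
    [Fact (1 ≤ ENNReal.ofReal p)]
    (hq : 1 / ENNReal.ofReal p + 1 / q = 1)
    (s : ℕ → ℕ → ℂ) :
    ((∃ T : lp (fun _ : ℕ => ℂ) q →L[ℂ] lp (fun _ : ℕ => ℂ) (ENNReal.ofReal p),
        (∀ (x : lp (fun _ : ℕ => ℂ) q) (j : ℕ),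
          (T x : ∀ _ : ℕ, ℂ) j = ∑' k : ℕ, s j k * (x : ∀ _ : ℕ, ℂ) k) ∧
        ∃ C : ℝ, 0 ≤ C ∧ IsPSummingWith p T C) ↔
      Summable (fun jk : ℕ × ℕ => ‖s jk.1 jk.2‖ ^ p)) ∧
    (∀ T : lp (fun _ : ℕ => ℂ) q →L[ℂ] lp (fun _ : ℕ => ℂ) (ENNReal.ofReal p),
      (∀ (x : lp (fun _ : ℕ => ℂ) q) (j : ℕ),
        (T x : ∀ _ : ℕ, ℂ) j = ∑' k : ℕ, s j k * (x : ∀ _ : ℕ, ℂ) k) →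
      (∃ C : ℝ, 0 ≤ C ∧ IsPSummingWith p T C) →
      pSummingNorm p T = (∑' jk : ℕ × ℕ, ‖s jk.1 jk.2‖ ^ p) ^ (1 / p)) := by
  classical
  obtain ⟨hq0, hqtop, hc⟩ := Stmt11Aux.conj_facts hp hq
  have hp0 : (0:ℝ) < p := lt_trans one_pos hp
  have hnn : ∀ jk : ℕ × ℕ, 0 ≤ ‖s jk.1 jk.2‖ ^ p :=
    fun jk => Real.rpow_nonneg (norm_nonneg _) _
  constructor
  · constructor
    · rintro ⟨T, hT, C, hC0, hps⟩
      exact Stmt11Aux.summable_of_psumming hp hc s T hT hC0 hps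
    · intro hs
      refine ⟨Stmt11Aux.matrixCLM hp hc s hs,
        fun x j => Stmt11Aux.matrixCLM_apply hp hc s hs x j,
        (∑' jk : ℕ × ℕ, ‖s jk.1 jk.2‖ ^ p) ^ (1 / p),
        Real.rpow_nonneg (tsum_nonneg hnn) _, ?_⟩
      exact Stmt11Aux.psumming_of_matrix hp hc s hs _
        (fun x j => Stmt11Aux.matrixCLM_apply hp hc s hs x j)
  · rintro T hT ⟨C, hC0, hps⟩
    have hs : Summable (fun jk : ℕ × ℕ => ‖s jk.1 jk.2‖ ^ p) :=
      Stmt11Aux.summable_of_psumming hp hc s T hT hC0 hps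
    set c : ℝ := (∑' jk : ℕ × ℕ, ‖s jk.1 jk.2‖ ^ p) ^ (1 / p) with hcdef
    have hc00 : 0 ≤ c := Real.rpow_nonneg (tsum_nonneg hnn) _
    apply le_antisymm
    · exact csInf_le ⟨0, fun x hx => hx.1⟩
        ⟨hc00, Stmt11Aux.psumming_of_matrix hp hc s hs T hT⟩
    · refine le_csInf ⟨C, hC0, hps⟩ ?_
      rintro C' ⟨hC0', hps'⟩
      have h1 : ∑' jk : ℕ × ℕ, ‖s jk.1 jk.2‖ ^ p ≤ C' ^ p :=
        Summable.tsum_le_of_sum_le hs (Stmt11Aux.finset_sum_le hp hc s T hT hC0' hps')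
      calc c ≤ (C' ^ p) ^ (1 / p) :=
            Real.rpow_le_rpow (tsum_nonneg hnn) h1 (by positivity)
        _ = C' := by rw [one_div, Real.rpow_rpow_inv hC0' hp0.ne']
end

section
/- Let p, q, r, s ∈ [1,∞] with r ≤ p and s ≤ q, and let λ = {λ_j}, μ = {μ_k} be sequences of real numbers. For n ∈ ℕ, define the triangular truncation associated to λ and μ by T^{λ,μ}_{Δ,n}(S) = Σ_{j,k ≤ n, μ_k ≤ λ_j} Q_k S P_j. Then ‖T^{λ,μ}_{Δ,n}‖ from L(ℓ_p, ℓ_q) to L(ℓ_r, ℓ_s) is at most ‖T_{Δ,n}‖, where T_{Δ,n} is the standard triangular truncation T_{Δ,n}(S) = Σ_{1≤k≤j≤n} Q_k S P_j. -/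
open scoped ENNReal NNReal
open Finset

/-- The operator norm of an `n×n` matrix viewed as an operator from `ℓ_p^n` to `ℓ_q^n`. -/
noncomputable def lpqOpNorm (p q : ℝ≥0∞) [Fact (1 ≤ p)] [Fact (1 ≤ q)] {n : ℕ}
    (A : Matrix (Fin n) (Fin n) ℂ) : ℝ :=
  ‖LinearMap.toContinuousLinearMap
    (((WithLp.linearEquiv q ℂ (∀ _ : Fin n, ℂ)).symm.toLinearMap.comp
      A.mulVecLin).comp
      (WithLp.linearEquiv p ℂ (∀ _ : Fin n, ℂ)).toLinearMap)‖



noncomputable def toLp (p : ℝ≥0∞) {n : ℕ} (v : Fin n → ℂ) : PiLp p (fun _ : Fin n => ℂ) :=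
  (WithLp.equiv p _).symm v

@[simp] lemma toLp_apply (p : ℝ≥0∞) {n : ℕ} (v : Fin n → ℂ) (i : Fin n) :
    toLp p v i = v i := rfl

lemma my_sum_rpow_le_rpow_sum {ι : Type*} (s : Finset ι) {t : ℝ} (ht : 1 ≤ t) (a : ι → ℝ≥0) :
    ∑ i ∈ s, a i ^ t ≤ (∑ i ∈ s, a i) ^ t := by
  rcases eq_or_ne (∑ i ∈ s, a i) 0 with h | h
  · rw [Finset.sum_eq_zero_iff] at h
    rw [Finset.sum_eq_zero fun i hi => by
      rw [h i hi, NNReal.zero_rpow (by linarith : t ≠ 0)]]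
    exact zero_le
  · calc ∑ i ∈ s, a i ^ t ≤ ∑ i ∈ s, a i * (∑ j ∈ s, a j) ^ (t - 1) := by
          refine Finset.sum_le_sum fun i hi => ?_
          rcases eq_or_ne (a i) 0 with h0 | h0
          · simp [h0, NNReal.zero_rpow (show t ≠ 0 by linarith)]
          · have e1 : a i ^ t = a i ^ (1 : ℝ) * a i ^ (t - 1) := by
              rw [← NNReal.rpow_add h0]; norm_num
            rw [e1, NNReal.rpow_one]
            exact mul_le_mul_right
              (NNReal.rpow_le_rpow
                (Finset.single_le_sum (fun _ _ => zero_le) hi) (by linarith)) _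
      _ = (∑ i ∈ s, a i) * (∑ j ∈ s, a j) ^ (t - 1) := by rw [← Finset.sum_mul]
      _ = (∑ i ∈ s, a i) ^ t := by
          nth_rewrite 1 [← NNReal.rpow_one (∑ i ∈ s, a i)]
          rw [← NNReal.rpow_add h]; norm_num

lemma nnnorm_apply_le_toLp (p : ℝ≥0∞) [Fact (1 ≤ p)] {n : ℕ} (v : Fin n → ℂ) (i : Fin n) :
    ‖v i‖₊ ≤ ‖toLp p v‖₊ := by
  rcases eq_or_ne p ∞ with hp | hp
  · subst hp
    rw [PiLp.nnnorm_eq_ciSup]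
    exact le_ciSup (f := fun j => ‖(toLp ⊤ v) j‖₊) (Set.Finite.bddAbove (Set.finite_range _)) i
  · have h1 : (1 : ℝ≥0∞) ≤ p := Fact.out
    have ht : 0 < p.toReal := ENNReal.toReal_pos (by intro h0; simp [h0] at h1) hp
    rw [PiLp.nnnorm_eq_sum hp]
    have hs : ‖v i‖₊ ^ p.toReal ≤ ∑ j, ‖(toLp p v) j‖₊ ^ p.toReal :=
      Finset.single_le_sum (f := fun j => ‖(toLp p v) j‖₊ ^ p.toReal)
        (fun _ _ => zero_le) (Finset.mem_univ i)
    calc ‖v i‖₊ = (‖v i‖₊ ^ p.toReal) ^ (1 / p.toReal) := by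
          rw [← NNReal.rpow_mul, mul_one_div, div_self ht.ne', NNReal.rpow_one]
      _ ≤ _ := NNReal.rpow_le_rpow hs (by positivity)

lemma toLp_nnnorm_antitone {p r : ℝ≥0∞} [Fact (1 ≤ p)] [Fact (1 ≤ r)] (hrp : r ≤ p)
    {n : ℕ} (v : Fin n → ℂ) : ‖toLp p v‖₊ ≤ ‖toLp r v‖₊ := by
  rcases eq_or_ne r ∞ with hr | hr
  · subst hr
    have hp : p = ⊤ := top_le_iff.mp hrp
    subst hp
    exact le_rfl
  · rcases eq_or_ne p ∞ with hp | hp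
    · subst hp
      rw [PiLp.nnnorm_eq_ciSup]
      exact ciSup_le' fun i => nnnorm_apply_le_toLp r v i
    · have h1r : (1 : ℝ≥0∞) ≤ r := Fact.out
      have hrt : 0 < r.toReal := ENNReal.toReal_pos (by intro h0; simp [h0] at h1r) hr
      have hpt : 0 < p.toReal := lt_of_lt_of_le hrt (ENNReal.toReal_mono hp hrp)
      have hdiv : 1 ≤ p.toReal / r.toReal :=
        (one_le_div hrt).mpr (ENNReal.toReal_mono hp hrp)
      rw [PiLp.nnnorm_eq_sum hp, PiLp.nnnorm_eq_sum hr]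
      have key : ∑ i, ‖v i‖₊ ^ p.toReal ≤ (∑ i, ‖v i‖₊ ^ r.toReal) ^ (p.toReal / r.toReal) := by
        calc ∑ i, ‖v i‖₊ ^ p.toReal = ∑ i, (‖v i‖₊ ^ r.toReal) ^ (p.toReal / r.toReal) := by
              refine Finset.sum_congr rfl fun i _ => ?_
              rw [← NNReal.rpow_mul]
              congr 1
              field_simp
          _ ≤ _ := my_sum_rpow_le_rpow_sum _ hdiv _
      calc (∑ i, ‖(toLp p v) i‖₊ ^ p.toReal) ^ (1 / p.toReal)
          ≤ ((∑ i, ‖v i‖₊ ^ r.toReal) ^ (p.toReal / r.toReal)) ^ (1 / p.toReal) :=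
            NNReal.rpow_le_rpow (by simpa using key) (by positivity)
        _ = (∑ i, ‖(toLp r v) i‖₊ ^ r.toReal) ^ (1 / r.toReal) := by
            rw [← NNReal.rpow_mul]
            simp only [toLp_apply]
            congr 1
            field_simp

lemma toLp_nnnorm_comp_equiv (p : ℝ≥0∞) [Fact (1 ≤ p)] {n : ℕ} (v : Fin n → ℂ)
    (e : Fin n ≃ Fin n) : ‖toLp p (v ∘ e)‖₊ = ‖toLp p v‖₊ := by
  have h := (LinearIsometryEquiv.piLpCongrLeft p ℂ ℂ e.symm).nnnorm_map (toLp p v)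
  rw [← h]
  congr 1

lemma sum_ite_unique_le {α : Type*} [Fintype α] [DecidableEq α] (P : α → Prop) [DecidablePred P]
    (hP : ∀ a b, P a → P b → a = b) (A : ℝ≥0) : (∑ a, if P a then A else 0) ≤ A := by
  by_cases hex : ∃ a, P a
  · obtain ⟨a0, ha0⟩ := hex
    rw [Finset.sum_eq_single a0]
    · simp [ha0]
    · intro b _ hb
      simp only [ite_eq_right_iff]
      intro hPb
      exact absurd (hP b a0 hPb ha0) hb
    · intro h; exact absurd (Finset.mem_univ a0) h
  · rw [Finset.sum_eq_zero]
    · exact zero_le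
    · intro a _
      simp [not_exists.mp hex a]


lemma lpqOpNorm_nonneg (p q : ℝ≥0∞) [Fact (1 ≤ p)] [Fact (1 ≤ q)] {n : ℕ}
    (A : Matrix (Fin n) (Fin n) ℂ) : 0 ≤ lpqOpNorm p q A := norm_nonneg _

lemma norm_toLp_mulVec_le (p q : ℝ≥0∞) [Fact (1 ≤ p)] [Fact (1 ≤ q)] {n : ℕ}
    (A : Matrix (Fin n) (Fin n) ℂ) (x : Fin n → ℂ) :
    ‖toLp q (A.mulVec x)‖ ≤ lpqOpNorm p q A * ‖toLp p x‖ := by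
  have h := (LinearMap.toContinuousLinearMap
    (((WithLp.linearEquiv q ℂ (∀ _ : Fin n, ℂ)).symm.toLinearMap.comp
      A.mulVecLin).comp
      (WithLp.linearEquiv p ℂ (∀ _ : Fin n, ℂ)).toLinearMap)).le_opNorm (toLp p x)
  exact h

lemma lpqOpNorm_le (p q : ℝ≥0∞) [Fact (1 ≤ p)] [Fact (1 ≤ q)] {n : ℕ}
    (A : Matrix (Fin n) (Fin n) ℂ) {c : ℝ} (hc : 0 ≤ c)
    (h : ∀ x : Fin n → ℂ, ‖toLp q (A.mulVec x)‖ ≤ c * ‖toLp p x‖) :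
    lpqOpNorm p q A ≤ c := by
  refine ContinuousLinearMap.opNorm_le_bound _ hc fun x => ?_
  exact h x

lemma toLp_contraction (p : ℝ≥0∞) [Fact (1 ≤ p)] {n : ℕ} (t : Fin n → Fin n → ℂ)
    (hdisj : ∀ j b b', t b j ≠ 0 → t b' j ≠ 0 → b = b')
    (hcol : ∀ b, ‖toLp p (t b)‖₊ ≤ 1) (w : Fin n → ℂ) :
    ‖toLp p (fun j => ∑ b, t b j * w b)‖₊ ≤ ‖toLp p w‖₊ := by
  have h1 : (1 : ℝ≥0∞) ≤ p := Fact.out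
  rcases eq_or_ne p ∞ with hp | hp
  · subst hp
    rw [PiLp.nnnorm_eq_ciSup]
    refine ciSup_le' fun j => ?_
    simp only [toLp_apply]
    by_cases hex : ∃ b, t b j ≠ 0
    · obtain ⟨b0, hb0⟩ := hex
      have hsum : ∑ b, t b j * w b = t b0 j * w b0 := by
        refine Finset.sum_eq_single b0 (fun b _ hb => ?_) (fun h => absurd (Finset.mem_univ b0) h)
        rcases eq_or_ne (t b j) 0 with h0 | h0
        · rw [h0, zero_mul]
        · exact absurd (hdisj j b b0 h0 hb0) hb
      rw [hsum, nnnorm_mul]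
      calc ‖t b0 j‖₊ * ‖w b0‖₊ ≤ 1 * ‖toLp ⊤ w‖₊ :=
            mul_le_mul' ((nnnorm_apply_le_toLp ⊤ (t b0) j).trans (hcol b0))
              (nnnorm_apply_le_toLp ⊤ w b0)
        _ = _ := one_mul _
    · have hz : ∑ b, t b j * w b = 0 := by
        refine Finset.sum_eq_zero fun b _ => ?_
        rw [not_exists.mp hex b |> not_ne_iff.mp, zero_mul]
      rw [hz]
      simp
  · have ht : 0 < p.toReal := ENNReal.toReal_pos (by intro h0; simp [h0] at h1) hp
    rw [PiLp.nnnorm_eq_sum hp, PiLp.nnnorm_eq_sum hp]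
    refine NNReal.rpow_le_rpow ?_ (by positivity)
    simp only [toLp_apply]
    have colbound : ∀ b, ∑ j, ‖t b j‖₊ ^ p.toReal ≤ 1 := by
      intro b
      have h := hcol b
      rw [PiLp.nnnorm_eq_sum hp] at h
      simp only [toLp_apply] at h
      calc ∑ j, ‖t b j‖₊ ^ p.toReal
          = ((∑ j, ‖t b j‖₊ ^ p.toReal) ^ (1 / p.toReal)) ^ p.toReal := by
            rw [← NNReal.rpow_mul, one_div, inv_mul_cancel₀ ht.ne', NNReal.rpow_one]
        _ ≤ 1 ^ p.toReal := NNReal.rpow_le_rpow h ht.le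
        _ = 1 := NNReal.one_rpow _
    have step1 : ∀ j, ‖∑ b, t b j * w b‖₊ ^ p.toReal
        ≤ ∑ b, ‖t b j‖₊ ^ p.toReal * ‖w b‖₊ ^ p.toReal := by
      intro j
      by_cases hex : ∃ b, t b j ≠ 0
      · obtain ⟨b0, hb0⟩ := hex
        have hsum : ∑ b, t b j * w b = t b0 j * w b0 := by
          refine Finset.sum_eq_single b0 (fun b _ hb => ?_)
            (fun h => absurd (Finset.mem_univ b0) h)
          rcases eq_or_ne (t b j) 0 with h0 | h0
          · rw [h0, zero_mul]
          · exact absurd (hdisj j b b0 h0 hb0) hb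
        rw [hsum, nnnorm_mul, NNReal.mul_rpow]
        exact Finset.single_le_sum
          (f := fun b => ‖t b j‖₊ ^ p.toReal * ‖w b‖₊ ^ p.toReal)
          (fun _ _ => zero_le) (Finset.mem_univ b0)
      · have hz : ∑ b, t b j * w b = 0 := by
          refine Finset.sum_eq_zero fun b _ => ?_
          rw [not_exists.mp hex b |> not_ne_iff.mp, zero_mul]
        rw [hz, nnnorm_zero, NNReal.zero_rpow ht.ne']
        exact zero_le
    calc ∑ j, ‖∑ b, t b j * w b‖₊ ^ p.toReal
        ≤ ∑ j, ∑ b, ‖t b j‖₊ ^ p.toReal * ‖w b‖₊ ^ p.toReal :=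
          Finset.sum_le_sum fun j _ => step1 j
      _ = ∑ b, (∑ j, ‖t b j‖₊ ^ p.toReal) * ‖w b‖₊ ^ p.toReal := by
          rw [Finset.sum_comm]
          exact Finset.sum_congr rfl fun b _ => (Finset.sum_mul _ _ _).symm
      _ ≤ ∑ b, 1 * ‖w b‖₊ ^ p.toReal :=
          Finset.sum_le_sum fun b _ => mul_le_mul' (colbound b) le_rfl
      _ = ∑ b, ‖w b‖₊ ^ p.toReal := by simp

lemma toLp_blocks_le (r : ℝ≥0∞) [Fact (1 ≤ r)] {n : ℕ} (c : Fin n → ℕ) (x : Fin n → ℂ) :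
    ‖toLp r (fun b : Fin n =>
        ((‖toLp r (fun j => if c j = (b : ℕ) + 1 then x j else 0)‖₊ : ℝ) : ℂ))‖₊
      ≤ ‖toLp r x‖₊ := by
  classical
  have h1 : (1 : ℝ≥0∞) ≤ r := Fact.out
  rcases eq_or_ne r ∞ with hr | hr
  · subst hr
    rw [PiLp.nnnorm_eq_ciSup]
    refine ciSup_le' fun b => ?_
    simp only [toLp_apply, Complex.nnnorm_real, NNReal.nnnorm_eq]
    rw [PiLp.nnnorm_eq_ciSup]
    refine ciSup_le' fun j => ?_
    simp only [toLp_apply]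
    by_cases h : c j = (b : ℕ) + 1
    · simp only [h, if_pos rfl]
      exact nnnorm_apply_le_toLp ⊤ x j
    · simp [h]
  · have ht : 0 < r.toReal := ENNReal.toReal_pos (by intro h0; simp [h0] at h1) hr
    rw [PiLp.nnnorm_eq_sum hr, PiLp.nnnorm_eq_sum hr]
    refine NNReal.rpow_le_rpow ?_ (by positivity)
    simp only [toLp_apply, Complex.nnnorm_real, NNReal.nnnorm_eq]
    have hbn : ∀ b : Fin n, ‖toLp r (fun j => if c j = (b : ℕ) + 1 then x j else 0)‖₊ ^ r.toReal
        = ∑ j, (if c j = (b : ℕ) + 1 then ‖x j‖₊ ^ r.toReal else 0) := by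
      intro b
      rw [PiLp.nnnorm_eq_sum hr, ← NNReal.rpow_mul, one_div, inv_mul_cancel₀ ht.ne',
        NNReal.rpow_one]
      refine Finset.sum_congr rfl fun j _ => ?_
      simp only [toLp_apply]
      by_cases h : c j = (b : ℕ) + 1
      · simp [h]
      · simp [h, NNReal.zero_rpow ht.ne']
    calc ∑ b : Fin n, ‖toLp r (fun j => if c j = (b : ℕ) + 1 then x j else 0)‖₊ ^ r.toReal
        = ∑ b : Fin n, ∑ j, (if c j = (b : ℕ) + 1 then ‖x j‖₊ ^ r.toReal else 0) :=
          Finset.sum_congr rfl fun b _ => hbn b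
      _ = ∑ j, ∑ b : Fin n, (if c j = (b : ℕ) + 1 then ‖x j‖₊ ^ r.toReal else 0) :=
          Finset.sum_comm
      _ ≤ ∑ j, ‖x j‖₊ ^ r.toReal := by
          refine Finset.sum_le_sum fun j _ => ?_
          refine sum_ite_unique_le _ (fun a b ha hb => ?_) _
          have : (a : ℕ) = (b : ℕ) := by omega
          exact Fin.ext this

open scoped Classical in
noncomputable def phiF (mu : ℕ → ℝ) {n : ℕ} (k : Fin n) : ℕ :=
  (Finset.univ.filter fun k' : Fin n =>
    mu k' < mu k ∨ (mu k' = mu k ∧ k' < k)).card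

open scoped Classical in
noncomputable def cF (lam mu : ℕ → ℝ) {n : ℕ} (j : Fin n) : ℕ :=
  (Finset.univ.filter fun k : Fin n => mu k ≤ lam j).card

open scoped Classical

lemma phiF_lt (mu : ℕ → ℝ) {n : ℕ} (k : Fin n) : phiF mu k < n := by
  have hk : (k : Fin n) ∉ Finset.univ.filter fun k' : Fin n =>
      mu k' < mu k ∨ (mu k' = mu k ∧ k' < k) := by
    simp [lt_irrefl]
  have hss : (Finset.univ.filter fun k' : Fin n =>
      mu k' < mu k ∨ (mu k' = mu k ∧ k' < k)) ⊂ Finset.univ := by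
    rw [Finset.ssubset_iff_of_subset (Finset.subset_univ _)]
    exact ⟨k, Finset.mem_univ k, hk⟩
  have := Finset.card_lt_card hss
  simpa [phiF] using this

lemma cF_le (lam mu : ℕ → ℝ) {n : ℕ} (j : Fin n) : cF lam mu j ≤ n := by
  have := Finset.card_le_card (Finset.subset_univ
    (Finset.univ.filter fun k : Fin n => mu k ≤ lam j))
  simpa [cF] using this

lemma phiF_key (lam mu : ℕ → ℝ) {n : ℕ} (k j : Fin n) :
    mu k ≤ lam j ↔ phiF mu k < cF lam mu j := by
  constructor
  · intro h
    refine Finset.card_lt_card ?_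
    rw [Finset.ssubset_iff_of_subset]
    · exact ⟨k, by simp [h], by simp [lt_irrefl]⟩
    · intro k' hk'
      simp only [Finset.mem_filter, Finset.mem_univ, true_and] at hk' ⊢
      rcases hk' with h1 | ⟨h1, _⟩
      · linarith
      · linarith
  · intro h
    by_contra hc
    push_neg at hc
    have hsub : (Finset.univ.filter fun k' : Fin n => mu k' ≤ lam j) ⊆
        Finset.univ.filter fun k' : Fin n =>
          mu k' < mu k ∨ (mu k' = mu k ∧ k' < k) := by
      intro k' hk'
      simp only [Finset.mem_filter, Finset.mem_univ, true_and] at hk' ⊢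
      left; linarith
    have := Finset.card_le_card hsub
    rw [← cF] at this
    rw [← phiF] at this
    omega

lemma phiF_mono (mu : ℕ → ℝ) {n : ℕ} {k k' : Fin n}
    (h : mu k < mu k' ∨ (mu k = mu k' ∧ k < k')) : phiF mu k < phiF mu k' := by
  refine Finset.card_lt_card ?_
  rw [Finset.ssubset_iff_of_subset]
  · refine ⟨k, ?_, by simp [lt_irrefl]⟩
    simp only [Finset.mem_filter, Finset.mem_univ, true_and]
    exact h
  · intro a ha
    simp only [Finset.mem_filter, Finset.mem_univ, true_and] at ha ⊢
    rcases ha with h1 | ⟨h1, h2⟩ <;> rcases h with h3 | ⟨h3, h4⟩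
    · left; linarith
    · left; linarith
    · left; linarith
    · right; exact ⟨by linarith, lt_trans h2 h4⟩

lemma phiF_inj (mu : ℕ → ℝ) {n : ℕ} : Function.Injective fun k : Fin n =>
    (⟨phiF mu k, phiF_lt mu k⟩ : Fin n) := by
  intro a b hab
  simp only [Fin.mk.injEq] at hab
  by_contra hne
  rcases lt_trichotomy (mu a) (mu b) with h | h | h
  · exact absurd hab (Nat.ne_of_lt (phiF_mono mu (Or.inl h)))
  · rcases lt_trichotomy a b with h2 | h2 | h2
    · exact absurd hab (Nat.ne_of_lt (phiF_mono mu (Or.inr ⟨h, h2⟩)))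
    · exact hne h2
    · exact absurd hab.symm (Nat.ne_of_lt (phiF_mono mu (Or.inr ⟨h.symm, h2⟩)))
  · exact absurd hab.symm (Nat.ne_of_lt (phiF_mono mu (Or.inl h)))


/-- Let `p, q, r, s ∈ [1,∞]` with `r ≤ p` and `s ≤ q`, and let `λ`, `μ` be sequences of
real numbers.  If `C` bounds the standard triangular truncation `T_{Δ,n}`
(keeping entries `(k,j)` with `k ≤ j`) from `L(ℓ_p,ℓ_q)` to `L(ℓ_r,ℓ_s)`, then `C` also
bounds the triangular truncation `T^{λ,μ}_{Δ,n}` associated to `λ` and `μ` (keeping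
entries `(k,j)` with `μ_k ≤ λ_j`); that is,
`‖T^{λ,μ}_{Δ,n}‖_{L(ℓ_p,ℓ_q) → L(ℓ_r,ℓ_s)} ≤ ‖T_{Δ,n}‖_{L(ℓ_p,ℓ_q) → L(ℓ_r,ℓ_s)}`. -/
theorem stmt_17 (p q r s : ℝ≥0∞) [Fact (1 ≤ p)] [Fact (1 ≤ q)] [Fact (1 ≤ r)]
    [Fact (1 ≤ s)] (hrp : r ≤ p) (hsq : s ≤ q)
    (lam mu : ℕ → ℝ) (n : ℕ) (C : ℝ) (hC : 0 ≤ C)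
    (hTri : ∀ S : Matrix (Fin n) (Fin n) ℂ,
      lpqOpNorm r s (Matrix.of fun k j : Fin n => if (k : ℕ) ≤ (j : ℕ) then S k j else 0) ≤
        C * lpqOpNorm p q S) :
    ∀ S : Matrix (Fin n) (Fin n) ℂ,
      lpqOpNorm r s
          (Matrix.of fun k j : Fin n => if mu (k : ℕ) ≤ lam (j : ℕ) then S k j else 0) ≤
        C * lpqOpNorm p q S := by
  intro S
  classical
  have ebij : Function.Bijective fun k : Fin n => (⟨phiF mu k, phiF_lt mu k⟩ : Fin n) :=
    Finite.injective_iff_bijective.mp (phiF_inj mu)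
  set e : Fin n ≃ Fin n := Equiv.ofBijective _ ebij with he_def
  have he : ∀ k : Fin n, (e k : ℕ) = phiF mu k := fun k => rfl
  refine lpqOpNorm_le r s _ (mul_nonneg hC (lpqOpNorm_nonneg p q S)) fun x => ?_
  set xb : Fin n → Fin n → ℂ :=
    fun b j => if cF lam mu j = (b : ℕ) + 1 then x j else 0 with hxb
  set N : Fin n → ℝ≥0 := fun b => ‖toLp r (xb b)‖₊ with hN
  set u : Fin n → ℂ := fun b => ((N b : ℝ) : ℂ) with hu
  set X : Matrix (Fin n) (Fin n) ℂ :=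
    Matrix.of fun j b => if N b = 0 then 0 else xb b j / ((N b : ℝ) : ℂ) with hX
  set S' : Matrix (Fin n) (Fin n) ℂ :=
    Matrix.of fun a b => ∑ j, S (e.symm a) j * X j b with hS'
  set T' : Matrix (Fin n) (Fin n) ℂ :=
    Matrix.of fun k j : Fin n => if (k : ℕ) ≤ (j : ℕ) then S' k j else 0 with hT'
  -- pointwise identity for X * u
  have hXu : ∀ (j b : Fin n), X j b * u b = xb b j := by
    intro j b
    by_cases h0 : N b = 0
    · have hx0 : xb b j = 0 := by
        have h := nnnorm_apply_le_toLp r (xb b) j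
        have hNb : ‖toLp r (xb b)‖₊ = N b := rfl
        rw [hNb, h0, le_zero_iff, nnnorm_eq_zero] at h
        exact h
      simp [hX, h0, hx0, hu]
    · have hne : ((N b : ℝ) : ℂ) ≠ 0 := by
        simp only [ne_eq, Complex.ofReal_eq_zero, NNReal.coe_eq_zero]
        exact h0
      simp only [hX, Matrix.of_apply, if_neg h0, hu]
      exact div_mul_cancel₀ _ hne
  -- coordinate identity
  have hId : ∀ k : Fin n,
      (Matrix.of fun k j : Fin n => if mu (k : ℕ) ≤ lam (j : ℕ) then S k j else 0).mulVec x k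
        = T'.mulVec u (e k) := by
    intro k
    have hinner : ∀ j : Fin n,
        (∑ b : Fin n, if phiF mu k ≤ (b : ℕ) then xb b j else 0)
          = (if phiF mu k < cF lam mu j then x j else 0) := by
      intro j
      by_cases hcj : phiF mu k < cF lam mu j
      · rw [if_pos hcj]
        have hcle := cF_le lam mu j
        have hcn : cF lam mu j - 1 < n := by omega
        have hb0 : ((⟨cF lam mu j - 1, hcn⟩ : Fin n) : ℕ) = cF lam mu j - 1 := rfl
        have hcond1 : phiF mu k ≤ ((⟨cF lam mu j - 1, hcn⟩ : Fin n) : ℕ) := by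
          rw [hb0]; omega
        have hcond2 : cF lam mu j = ((⟨cF lam mu j - 1, hcn⟩ : Fin n) : ℕ) + 1 := by
          rw [hb0]; omega
        rw [Finset.sum_eq_single (⟨cF lam mu j - 1, hcn⟩ : Fin n)
          (fun b _ hb => ?_) (fun h => absurd (Finset.mem_univ _) h)]
        · rw [if_pos hcond1]
          simp only [hxb]
          rw [if_pos hcond2]
        · have hxb0 : xb b j = 0 := by
            simp only [hxb]
            rw [if_neg]
            intro hc
            exact hb (Fin.ext (by rw [hb0]; omega))
          simp [hxb0]
      · rw [if_neg hcj]
        refine Finset.sum_eq_zero fun b _ => ?_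
        by_cases h : phiF mu k ≤ (b : ℕ)
        · rw [if_pos h]
          simp only [hxb]
          rw [if_neg]
          omega
        · rw [if_neg h]
    calc (Matrix.of fun k j : Fin n =>
            if mu (k : ℕ) ≤ lam (j : ℕ) then S k j else 0).mulVec x k
        = ∑ j : Fin n, (if mu (k : ℕ) ≤ lam (j : ℕ) then S k j else 0) * x j := by
          simp [Matrix.mulVec, dotProduct]
      _ = ∑ j : Fin n, S k j * (if phiF mu k < cF lam mu j then x j else 0) := by
          refine Finset.sum_congr rfl fun j _ => ?_
          by_cases h : mu (k : ℕ) ≤ lam (j : ℕ)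
          · rw [if_pos h, if_pos ((phiF_key lam mu k j).mp h)]
          · rw [if_neg h, if_neg (fun hlt => h ((phiF_key lam mu k j).mpr hlt))]
            simp
      _ = ∑ j : Fin n, S k j * (∑ b : Fin n, if phiF mu k ≤ (b : ℕ) then xb b j else 0) := by
          refine Finset.sum_congr rfl fun j _ => ?_
          rw [hinner j]
      _ = ∑ b : Fin n, ∑ j : Fin n, (if phiF mu k ≤ (b : ℕ) then S k j * (X j b * u b) else 0) := by
          rw [Finset.sum_comm]
          refine Finset.sum_congr rfl fun j _ => ?_
          rw [Finset.mul_sum]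
          refine Finset.sum_congr rfl fun b _ => ?_
          by_cases h : phiF mu k ≤ (b : ℕ)
          · rw [if_pos h, if_pos h, hXu j b]
          · simp [h]
      _ = ∑ b : Fin n, (if ((e k : Fin n) : ℕ) ≤ (b : ℕ) then S' (e k) b else 0) * u b := by
          refine Finset.sum_congr rfl fun b _ => ?_
          simp only [he]
          by_cases h : phiF mu k ≤ (b : ℕ)
          · simp only [if_pos h]
            simp only [hS', Matrix.of_apply, Equiv.symm_apply_apply, Finset.sum_mul]
            refine Finset.sum_congr rfl fun j _ => ?_
            ring
          · simp [h]
      _ = T'.mulVec u (e k) := by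
          simp [hT', Matrix.mulVec, dotProduct]
  -- operator norm of S' bounded by that of S
  have hcontr : ∀ w : Fin n → ℂ, ‖toLp p (X.mulVec w)‖₊ ≤ ‖toLp p w‖₊ := by
    intro w
    have hmv : X.mulVec w = fun j => ∑ b, (fun b j => X j b) b j * w b := by
      funext j
      simp [Matrix.mulVec, dotProduct]
    rw [hmv]
    refine toLp_contraction p (fun b j => X j b) (fun j b b' hb hb' => ?_) (fun b => ?_) w
    · have h1 : xb b j ≠ 0 := by
        simp only [hX, Matrix.of_apply] at hb
        by_cases h0 : N b = 0
        · simp [h0] at hb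
        · rw [if_neg h0] at hb
          exact fun h => hb (by rw [h, zero_div])
      have h2 : xb b' j ≠ 0 := by
        simp only [hX, Matrix.of_apply] at hb'
        by_cases h0 : N b' = 0
        · simp [h0] at hb'
        · rw [if_neg h0] at hb'
          exact fun h => hb' (by rw [h, zero_div])
      have hc1 : cF lam mu j = (b : ℕ) + 1 := by
        by_contra hcc
        apply h1
        simp only [hxb]
        rw [if_neg hcc]
      have hc2 : cF lam mu j = (b' : ℕ) + 1 := by
        by_contra hcc
        apply h2
        simp only [hxb]
        rw [if_neg hcc]
      exact Fin.ext (by omega)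
    · show ‖toLp p (fun j => X j b)‖₊ ≤ 1
      by_cases h0 : N b = 0
      · have : (fun j => X j b) = fun _ => (0 : ℂ) := by
          funext j
          simp [hX, h0]
        rw [this]
        have : toLp p (fun _ : Fin n => (0 : ℂ)) = 0 := rfl
        rw [this, nnnorm_zero]
        exact zero_le_one
      · have hcoleq : (fun j => X j b) = fun j => (((N b : ℝ) : ℂ))⁻¹ * xb b j := by
          funext j
          simp only [hX, Matrix.of_apply, if_neg h0]
          rw [div_eq_inv_mul]
        rw [hcoleq]
        have hsmul : toLp p (fun j => (((N b : ℝ) : ℂ))⁻¹ * xb b j)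
            = (((N b : ℝ) : ℂ))⁻¹ • toLp p (xb b) := rfl
        rw [hsmul, nnnorm_smul]
        have hnn : ‖(((N b : ℝ) : ℂ))⁻¹‖₊ = (N b)⁻¹ := by
          rw [nnnorm_inv, Complex.nnnorm_real, NNReal.nnnorm_eq]
        rw [hnn]
        have hle : ‖toLp p (xb b)‖₊ ≤ N b := by
          have := toLp_nnnorm_antitone hrp (xb b)
          rw [hN]
          exact this
        calc (N b)⁻¹ * ‖toLp p (xb b)‖₊ ≤ (N b)⁻¹ * N b := mul_le_mul_right hle _
          _ = 1 := inv_mul_cancel₀ h0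
  have hS'le : lpqOpNorm p q S' ≤ lpqOpNorm p q S := by
    refine lpqOpNorm_le p q S' (lpqOpNorm_nonneg p q S) fun w => ?_
    have h1 : S'.mulVec w = (S.mulVec (X.mulVec w)) ∘ e.symm := by
      funext a
      simp only [hS', Matrix.mulVec, dotProduct, Matrix.of_apply, Function.comp_apply,
        Finset.sum_mul, Finset.mul_sum]
      rw [Finset.sum_comm]
      refine Finset.sum_congr rfl fun j _ => Finset.sum_congr rfl fun b _ => ?_
      ring
    rw [h1]
    have h2 : ‖toLp q ((S.mulVec (X.mulVec w)) ∘ ⇑e.symm)‖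
        = ‖toLp q (S.mulVec (X.mulVec w))‖ := by
      rw [← coe_nnnorm, ← coe_nnnorm, toLp_nnnorm_comp_equiv]
    rw [h2]
    calc ‖toLp q (S.mulVec (X.mulVec w))‖
        ≤ lpqOpNorm p q S * ‖toLp p (X.mulVec w)‖ := norm_toLp_mulVec_le p q S _
      _ ≤ lpqOpNorm p q S * ‖toLp p w‖ := by
          refine mul_le_mul_of_nonneg_left ?_ (lpqOpNorm_nonneg p q S)
          have := hcontr w
          rw [← coe_nnnorm, ← coe_nnnorm]
          exact_mod_cast this
  have hu_le : ‖toLp r u‖ ≤ ‖toLp r x‖ := by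
    have := toLp_blocks_le r (cF lam mu) x
    rw [← coe_nnnorm, ← coe_nnnorm]
    exact_mod_cast this
  have hMT : (Matrix.of fun k j : Fin n =>
      if mu (k : ℕ) ≤ lam (j : ℕ) then S k j else 0).mulVec x = (T'.mulVec u) ∘ e := by
    funext k
    rw [Function.comp_apply]
    exact hId k
  calc ‖toLp s ((Matrix.of fun k j : Fin n =>
          if mu (k : ℕ) ≤ lam (j : ℕ) then S k j else 0).mulVec x)‖
      = ‖toLp s (T'.mulVec u)‖ := by
        rw [hMT, ← coe_nnnorm, ← coe_nnnorm, toLp_nnnorm_comp_equiv]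
    _ ≤ lpqOpNorm r s T' * ‖toLp r u‖ := norm_toLp_mulVec_le r s T' u
    _ ≤ (C * lpqOpNorm p q S') * ‖toLp r u‖ :=
        mul_le_mul_of_nonneg_right (hTri S') (norm_nonneg _)
    _ ≤ (C * lpqOpNorm p q S) * ‖toLp r u‖ :=
        mul_le_mul_of_nonneg_right (mul_le_mul_of_nonneg_left hS'le hC) (norm_nonneg _)
    _ ≤ (C * lpqOpNorm p q S) * ‖toLp r x‖ :=
        mul_le_mul_of_nonneg_left hu_le (mul_nonneg hC (lpqOpNorm_nonneg p q S))
end
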